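/- arXiv:2305.11119 — 6 statements merged into one kernel-verified Lean document; each statement's English description precedes it below -/
import Mathlib

section
/- If a bounded above acyclic complex of injective right S-modules has the property that it is of the form F•⁺ for a bounded below acyclic complex F• of flat left S-modules (applying the character module functor termwise), and all its cocycle modules are injective, then all the cocycle modules of F• are flat; consequently, if every bounded above acyclic complex of injective right S-modules is contractible, then every bounded below acyclic complex of flat left S-modules is pure acyclic. -/
open TensorProduct

universe w

section NoncommFlat

variable (S : Type*) [Ring S]

/-- The subgroup of relations defining the tensor product `M ⊗_S N` of a right `S`-module `M`
and a left `S`-module `N` over a (possibly noncommutative) ring `S`. -/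
noncomputable def tensorRel (M : Type*) [AddCommGroup M] [Module Sᵐᵒᵖ M]
    (N : Type*) [AddCommGroup N] [Module S N] : AddSubgroup (M ⊗[ℤ] N) :=
  AddSubgroup.closure {x | ∃ (m : M) (s : S) (n : N),
    x = (MulOpposite.op s • m) ⊗ₜ[ℤ] n - m ⊗ₜ[ℤ] (s • n)}

/-- The tensor product `M ⊗_S N` of a right `S`-module `M` and a left `S`-module `N` over
a (possibly noncommutative) ring `S`, as an abelian group. -/
def TensorOver (M : Type*) [AddCommGroup M] [Module Sᵐᵒᵖ M]
    (N : Type*) [AddCommGroup N] [Module S N] : Type _ :=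
  (M ⊗[ℤ] N) ⧸ tensorRel S M N

noncomputable instance (M : Type*) [AddCommGroup M] [Module Sᵐᵒᵖ M]
    (N : Type*) [AddCommGroup N] [Module S N] : AddCommGroup (TensorOver S M N) :=
  QuotientAddGroup.Quotient.addCommGroup _

/-- The map `M ⊗_S N → M' ⊗_S N` induced by a morphism of right `S`-modules `f : M → M'`. -/
noncomputable def tensorMap {M M' : Type*} [AddCommGroup M] [Module Sᵐᵒᵖ M]
    [AddCommGroup M'] [Module Sᵐᵒᵖ M'] (f : M →ₗ[Sᵐᵒᵖ] M')
    (N : Type*) [AddCommGroup N] [Module S N] :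
    TensorOver S M N →+ TensorOver S M' N :=
  QuotientAddGroup.map _ _
    ((TensorProduct.map f.toAddMonoidHom.toIntLinearMap (LinearMap.id (R := ℤ) (M := N))).toAddMonoidHom)
    (by
      refine (AddSubgroup.closure_le _).2 ?_
      rintro x ⟨m, s, n, rfl⟩
      rw [SetLike.mem_coe, AddSubgroup.mem_comap]
      have h2 : ∀ a : M, f.toAddMonoidHom.toIntLinearMap a = f a := fun _ => rfl
      simp only [LinearMap.toAddMonoidHom_coe, map_sub, TensorProduct.map_tmul, h2,
        map_smul, LinearMap.id_coe, id_eq]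
      exact AddSubgroup.subset_closure ⟨f m, s, n, rfl⟩)

/-- A left `S`-module `N` over a (possibly noncommutative) ring `S` is flat if tensoring
with `N` over `S` preserves injectivity of maps of right `S`-modules. -/
def IsFlatMod (N : Type*) [AddCommGroup N] [Module S N] : Prop :=
  ∀ ⦃M M' : Type w⦄ [AddCommGroup M] [Module Sᵐᵒᵖ M] [AddCommGroup M'] [Module Sᵐᵒᵖ M']
    (f : M →ₗ[Sᵐᵒᵖ] M'), Function.Injective f → Function.Injective (tensorMap S f N)

end NoncommFlat

/-- The natural right `S`-module (i.e. `Sᵐᵒᵖ`-module) structure on the character module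
`F⁺ = Hom_ℤ(F, ℚ/ℤ)` of a left `S`-module `F`, given by `(f • s) m = f (s • m)`. -/
noncomputable instance CharacterModule.moduleOp (S : Type*) [Ring S]
    (F : Type*) [AddCommGroup F] [Module S F] :
    Module Sᵐᵒᵖ (CharacterModule F) where
  smul s f := f.comp (DistribSMul.toAddMonoidHom F s.unop)
  one_smul f := by
    ext m; change f ((1 : Sᵐᵒᵖ).unop • m) = f m; simp
  mul_smul s t f := by
    ext m
    change f ((s * t).unop • m) = f (t.unop • s.unop • m)
    rw [← mul_smul]; rfl
  smul_zero s := by ext m; rfl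
  smul_add s f g := by ext m; rfl
  add_smul s t f := by
    ext m
    change f ((s + t).unop • m) = f (s.unop • m) + f (t.unop • m)
    rw [MulOpposite.unop_add, add_smul, map_add]
  zero_smul f := by
    ext m; change f ((0 : Sᵐᵒᵖ).unop • m) = 0; simp

/-- The map of character modules (as right `S`-modules) induced by a map of left `S`-modules. -/
noncomputable def dualMapOp {S : Type*} [Ring S] {M N : Type*} [AddCommGroup M] [Module S M]
    [AddCommGroup N] [Module S N] (f : M →ₗ[S] N) :
    CharacterModule N →ₗ[Sᵐᵒᵖ] CharacterModule M where
  toFun L := L.comp f.toAddMonoidHom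
  map_add' _ _ := by ext m; rfl
  map_smul' s L := by
    ext m
    change L (s.unop • f m) = L (f (s.unop • m))
    rw [f.map_smul]

section AuxBasic

universe u' v'

theorem Module.Injective.of_subsingleton (R : Type u') [Ring R] (Q : Type v') [AddCommGroup Q]
    [Module R Q] [Subsingleton Q] : Module.Injective R Q where
  out _X _Y _ _ _ _ _f _hf _g := ⟨0, fun _ => Subsingleton.elim _ _⟩

theorem Module.Injective.of_equiv {R : Type u'} [Ring R] {A B : Type v'} [AddCommGroup A]
    [Module R A] [AddCommGroup B] [Module R B] (e : A ≃ₗ[R] B) (h : Module.Injective R A) :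
    Module.Injective R B where
  out _X _Y _ _ _ _ f hf g := by
    obtain ⟨k, hk⟩ := h.out f hf (e.symm.toLinearMap ∘ₗ g)
    exact ⟨e.toLinearMap ∘ₗ k, fun x => by simp [hk x]⟩

theorem Module.Injective.of_retract {R : Type u'} [Ring R] {A B : Type v'} [AddCommGroup A]
    [Module R A] [AddCommGroup B] [Module R B] (s : A →ₗ[R] B) (r : B →ₗ[R] A)
    (hrs : ∀ a, r (s a) = a) (h : Module.Injective R B) : Module.Injective R A where
  out _X _Y _ _ _ _ f hf g := by
    obtain ⟨k, hk⟩ := h.out f hf (s ∘ₗ g)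
    exact ⟨r ∘ₗ k, fun x => by simp [hk x, hrs]⟩

instance CharacterModule.instSubsingleton (A : Type v') [AddCommGroup A] [Subsingleton A] :
    Subsingleton (CharacterModule A) :=
  ⟨fun c c' => DFunLike.ext _ _ fun x => by
    rw [Subsingleton.elim x 0, map_zero, map_zero]⟩

@[simp] lemma dualMapOp_apply {S : Type*} [Ring S] {M N : Type*} [AddCommGroup M] [Module S M]
    [AddCommGroup N] [Module S N] (f : M →ₗ[S] N) (L : CharacterModule N) (m : M) :
    dualMapOp f L m = L (f m) := rfl

@[simp] lemma CharacterModule.op_smul_apply {S : Type*} [Ring S] {F : Type*} [AddCommGroup F]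
    [Module S F] (s : Sᵐᵒᵖ) (c : CharacterModule F) (m : F) :
    (s • c) m = c (s.unop • m) := rfl

/-- The character dual of a linear equivalence, as an `Sᵐᵒᵖ`-linear equivalence. -/
noncomputable def dualEquivOp {S : Type*} [Ring S] {M N : Type*} [AddCommGroup M] [Module S M]
    [AddCommGroup N] [Module S N] (e : M ≃ₗ[S] N) :
    CharacterModule N ≃ₗ[Sᵐᵒᵖ] CharacterModule M :=
  LinearEquiv.ofLinear (dualMapOp e.toLinearMap) (dualMapOp e.symm.toLinearMap)
    (LinearMap.ext fun L => DFunLike.ext _ _ fun m => congrArg L (e.symm_apply_apply m))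
    (LinearMap.ext fun L => DFunLike.ext _ _ fun m => congrArg L (e.apply_symm_apply m))

end AuxBasic

section AuxTensor

variable {S : Type*} [Ring S] {M M' : Type*} [AddCommGroup M] [Module Sᵐᵒᵖ M]
  [AddCommGroup M'] [Module Sᵐᵒᵖ M'] {N : Type*} [AddCommGroup N] [Module S N]

namespace TensorOver

/-- The canonical generator `m ⊗ n` of `TensorOver S M N`. -/
noncomputable def mk (m : M) (n : N) : TensorOver S M N :=
  QuotientAddGroup.mk (m ⊗ₜ[ℤ] n)

lemma ind {P : TensorOver S M N → Prop} (x : TensorOver S M N)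
    (h : ∀ z : M ⊗[ℤ] N, P (QuotientAddGroup.mk z)) : P x :=
  QuotientAddGroup.induction_on x h

lemma mk_add_left (m m' : M) (n : N) :
    mk (S := S) (m + m') n = mk m n + mk m' n := by
  rw [mk, mk, mk, TensorProduct.add_tmul]
  rfl

lemma mk_add_right (m : M) (n n' : N) :
    mk (S := S) m (n + n') = mk m n + mk m n' := by
  rw [mk, mk, mk, TensorProduct.tmul_add]
  rfl

lemma mk_zero_right (m : M) : mk (S := S) (N := N) m 0 = 0 := by
  rw [mk, TensorProduct.tmul_zero]
  rfl

lemma mem_tensorRel (m : M) (s : S) (n : N) :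
    (MulOpposite.op s • m) ⊗ₜ[ℤ] n - m ⊗ₜ[ℤ] (s • n) ∈ tensorRel S M N :=
  AddSubgroup.subset_closure ⟨m, s, n, rfl⟩

lemma mk_smul (m : M) (s : S) (n : N) :
    mk (S := S) (MulOpposite.op s • m) n = mk m (s • n) := by
  rw [mk, mk]
  change (QuotientAddGroup.mk _ : (M ⊗[ℤ] N) ⧸ tensorRel S M N) = QuotientAddGroup.mk _
  rw [QuotientAddGroup.eq, neg_add_eq_sub]
  have h := neg_mem (mem_tensorRel m s n)
  rwa [neg_sub] at h

lemma tensorMap_mk (f : M →ₗ[Sᵐᵒᵖ] M') (m : M) (n : N) :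
    tensorMap S f N (mk m n) = mk (f m) n := by
  show QuotientAddGroup.map _ _ _ _ (QuotientAddGroup.mk _) = _
  change QuotientAddGroup.mk (TensorProduct.map f.toAddMonoidHom.toIntLinearMap
    (LinearMap.id (R := ℤ) (M := N)) (m ⊗ₜ[ℤ] n)) =
    (QuotientAddGroup.mk ((f m) ⊗ₜ[ℤ] n) : (M' ⊗[ℤ] N) ⧸ tensorRel S M' N)
  exact congrArg _ (TensorProduct.map_tmul _ _ _ _)

end TensorOver

/-- A character of `M ⊗_S N` gives an `Sᵐᵒᵖ`-linear map `M → N⁺`. -/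
noncomputable def charToLinear (χ : CharacterModule (TensorOver S M N)) :
    M →ₗ[Sᵐᵒᵖ] CharacterModule N where
  toFun m :=
    { toFun := fun n => χ (TensorOver.mk m n)
      map_zero' := by show χ (TensorOver.mk m 0) = 0; rw [TensorOver.mk_zero_right, map_zero]
      map_add' := fun n n' => by
        show χ (TensorOver.mk m (n + n')) = χ (TensorOver.mk m n) + χ (TensorOver.mk m n')
        rw [TensorOver.mk_add_right, map_add] }
  map_add' m m' := by
    refine DFunLike.ext _ _ fun n => ?_
    show χ (TensorOver.mk (m + m') n) = χ (TensorOver.mk m n) + χ (TensorOver.mk m' n)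
    rw [TensorOver.mk_add_left, map_add]
  map_smul' s m := by
    refine DFunLike.ext _ _ fun n => ?_
    show χ (TensorOver.mk (s • m) n) = χ (TensorOver.mk m (s.unop • n))
    rw [← TensorOver.mk_smul m s.unop n, MulOpposite.op_unop]

@[simp] lemma charToLinear_apply (χ : CharacterModule (TensorOver S M N)) (m : M) (n : N) :
    charToLinear χ m n = χ (TensorOver.mk m n) := rfl

/-- Auxiliary character on the plain tensor product. -/
noncomputable def linearToCharAux (g : M →ₗ[Sᵐᵒᵖ] CharacterModule N) :
    M ⊗[ℤ] N →+ AddCircle (1 : ℚ) :=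
  TensorProduct.liftAddHom
    { toFun := fun m => (g m : N →+ AddCircle (1 : ℚ))
      map_zero' := by show (g 0 : N →+ AddCircle (1 : ℚ)) = 0; rw [map_zero]
      map_add' := fun m m' => by
        show (g (m + m') : N →+ AddCircle (1 : ℚ)) = _; rw [map_add]; rfl }
    (fun z m n => by
      show g (z • m) n = g m (z • n)
      rw [map_zsmul g z m]
      show z • ((g m) n) = g m (z • n)
      rw [map_zsmul (g m) z n])

@[simp] lemma linearToCharAux_tmul (g : M →ₗ[Sᵐᵒᵖ] CharacterModule N) (m : M) (n : N) :
    linearToCharAux g (m ⊗ₜ[ℤ] n) = g m n :=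
  TensorProduct.liftAddHom_tmul _ _ _ _

lemma linearToCharAux_vanish (g : M →ₗ[Sᵐᵒᵖ] CharacterModule N) :
    ∀ x ∈ tensorRel S M N, linearToCharAux g x = 0 := by
  intro x hx
  have hle : tensorRel S M N ≤ (linearToCharAux g).ker := by
    rw [tensorRel]
    refine (AddSubgroup.closure_le _).2 ?_
    rintro y ⟨m, s, n, rfl⟩
    rw [SetLike.mem_coe, AddMonoidHom.mem_ker, map_sub, linearToCharAux_tmul,
      linearToCharAux_tmul, map_smul g, CharacterModule.op_smul_apply, MulOpposite.unop_op,
      sub_self]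
  exact AddMonoidHom.mem_ker.1 (hle hx)

/-- An `Sᵐᵒᵖ`-linear map `M → N⁺` gives a character of `M ⊗_S N`. -/
noncomputable def linearToChar (g : M →ₗ[Sᵐᵒᵖ] CharacterModule N) :
    CharacterModule (TensorOver S M N) :=
  QuotientAddGroup.lift (tensorRel S M N) (linearToCharAux g) (linearToCharAux_vanish g)

@[simp] lemma linearToChar_mk (g : M →ₗ[Sᵐᵒᵖ] CharacterModule N) (m : M) (n : N) :
    linearToChar g (TensorOver.mk m n) = g m n := by
  show QuotientAddGroup.lift _ _ _ (QuotientAddGroup.mk _) = _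
  change linearToCharAux g (m ⊗ₜ[ℤ] n) = _
  exact linearToCharAux_tmul _ _ _

end AuxTensor
section AuxLambek

universe uu

variable {S : Type uu} [Ring S]

/-- Lambek: a module with injective character dual is flat. -/
theorem isFlatMod_of_dual_injective {N : Type uu} [AddCommGroup N] [Module S N]
    (hN : Module.Injective Sᵐᵒᵖ (CharacterModule N)) : IsFlatMod.{uu} S N := by
  intro M M' _ _ _ _ f hf
  rw [injective_iff_map_eq_zero]
  intro x hx
  refine CharacterModule.eq_zero_of_character_apply fun χ => ?_
  obtain ⟨g', hg'⟩ := (Module.Baer.of_injective hN).extension_property f hf (charToLinear χ)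
  have key : ∀ y : TensorOver S M N, χ y = linearToChar g' (tensorMap S f N y) := by
    intro y
    refine TensorOver.ind (P := fun y => χ y = linearToChar g' (tensorMap S f N y)) y
      fun z => ?_
    induction z using TensorProduct.induction_on with
    | zero =>
        show χ (QuotientAddGroup.mk 0) = linearToChar g' (tensorMap S f N (QuotientAddGroup.mk 0))
        exact (map_zero χ).trans ((congrArg (linearToChar g') (map_zero (tensorMap S f N))).trans
          (map_zero _)).symm
    | tmul m n =>
        show χ (TensorOver.mk m n) = linearToChar g' (tensorMap S f N (TensorOver.mk m n))
        rw [TensorOver.tensorMap_mk, linearToChar_mk]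
        have := LinearMap.congr_fun hg' m
        rw [LinearMap.comp_apply] at this
        rw [this, charToLinear_apply]
    | add a b ha hb =>
        exact (map_add χ (QuotientAddGroup.mk a : TensorOver S M N) (QuotientAddGroup.mk b)).trans
          ((congrArg₂ (· + ·) ha hb).trans (((congrArg (linearToChar g')
            (map_add (tensorMap S f N) _ _)).trans (map_add _ _ _)).symm))
  rw [key x, hx, map_zero]

/-- Lambek: the character dual of a flat module is injective. -/
theorem dual_injective_of_isFlatMod {N : Type uu} [AddCommGroup N] [Module S N]
    (hN : IsFlatMod.{uu} S N) : Module.Injective Sᵐᵒᵖ (CharacterModule N) := by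
  refine Module.Baer.injective (fun I g => ?_)
  have hinj := hN I.subtype (Submodule.injective_subtype I)
  obtain ⟨χ', hχ'⟩ := (Module.Baer.of_divisible _).extension_property_addMonoidHom
      (tensorMap S I.subtype N) hinj (linearToChar g)
  refine ⟨charToLinear χ', fun x mem => ?_⟩
  refine DFunLike.ext _ _ fun n => ?_
  have h1 : tensorMap S I.subtype N (TensorOver.mk ⟨x, mem⟩ n) = TensorOver.mk x n :=
    TensorOver.tensorMap_mk _ _ _
  calc charToLinear χ' x n = χ' (TensorOver.mk x n) := rfl
    _ = χ' (tensorMap S I.subtype N (TensorOver.mk ⟨x, mem⟩ n)) := by rw [h1]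
    _ = linearToChar g (TensorOver.mk ⟨x, mem⟩ n) := DFunLike.congr_fun hχ' _
    _ = g ⟨x, mem⟩ n := linearToChar_mk _ _ _

/-- The character dual of the cocycles two steps up is the module of "dual cocycles". -/
noncomputable def dualKerEquiv {A B C D : Type*}
    [AddCommGroup A] [Module S A] [AddCommGroup B] [Module S B] [AddCommGroup C] [Module S C]
    [AddCommGroup D] [Module S D] (f : A →ₗ[S] B) (g : B →ₗ[S] C) (h : C →ₗ[S] D)
    (h1 : LinearMap.ker g = LinearMap.range f) (h2 : LinearMap.ker h = LinearMap.range g) :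
    CharacterModule (LinearMap.ker h) ≃ₗ[Sᵐᵒᵖ] LinearMap.ker (dualMapOp f) := by
  have e : (LinearMap.ker h) ≃ₗ[S] B ⧸ LinearMap.ker g :=
    (LinearEquiv.ofEq _ _ h2).trans (LinearMap.quotKerEquivRange g).symm
  have memΦ : ∀ L : CharacterModule (B ⧸ LinearMap.ker g),
      dualMapOp (LinearMap.ker g).mkQ L ∈ LinearMap.ker (dualMapOp f) := by
    intro L
    rw [LinearMap.mem_ker]
    refine DFunLike.ext _ _ fun a => ?_
    show L ((LinearMap.ker g).mkQ (f a)) = 0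
    have : f a ∈ LinearMap.ker g := h1 ▸ LinearMap.mem_range_self f a
    rw [show (LinearMap.ker g).mkQ (f a) = 0 from (Submodule.Quotient.mk_eq_zero _).2 this,
      map_zero]
  refine (dualEquivOp e.symm).trans (LinearEquiv.ofBijective
    (LinearMap.codRestrict _ (dualMapOp (LinearMap.ker g).mkQ) memΦ) ⟨?_, ?_⟩)
  · intro L L' hLL'
    refine DFunLike.ext _ _ fun q => ?_
    obtain ⟨b, rfl⟩ := Submodule.mkQ_surjective _ q
    exact DFunLike.congr_fun (congrArg Subtype.val hLL') b
  · rintro ⟨L, hL⟩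
    rw [LinearMap.mem_ker] at hL
    have hvan : ∀ b ∈ (LinearMap.ker g).toAddSubgroup, L b = 0 := by
      intro b hb
      rw [Submodule.mem_toAddSubgroup, h1, LinearMap.mem_range] at hb
      obtain ⟨a, rfl⟩ := hb
      exact DFunLike.congr_fun hL a
    refine ⟨QuotientAddGroup.lift (LinearMap.ker g).toAddSubgroup L hvan, ?_⟩
    exact Subtype.ext (DFunLike.ext _ _ fun b => rfl)

end AuxLambek
open CategoryTheory CategoryTheory.Limits

/-- Part 1: if a bounded below acyclic complex `F⁰ → F¹ → ⋯` of flat left `S`-modules is such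
that its termwise character dual — a bounded above acyclic complex of injective right
`S`-modules — has all its cocycle modules injective, then all the cocycle modules of `F•` are
flat.  Part 2 (consequently): if every bounded above acyclic complex of injective right
`S`-modules is contractible, then every bounded below acyclic complex of flat left `S`-modules
is pure acyclic. -/
theorem flat_cocycles_of_dual_cocycles_injective_and_purity (S : Type u) [Ring S] :
    (∀ (F : ℕ → Type u) (_ : ∀ n, AddCommGroup (F n)) (_ : ∀ n, Module S (F n))
      (d : ∀ n, F n →ₗ[S] F (n + 1)),
      (∀ n, IsFlatMod.{u} S (F n)) →
      (∀ n, (d (n + 1)).comp (d n) = 0) →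
      Function.Injective (d 0) →
      (∀ n, LinearMap.ker (d (n + 1)) = LinearMap.range (d n)) →
      (∀ n, Module.Injective Sᵐᵒᵖ (CharacterModule (F n))) →
      Module.Injective Sᵐᵒᵖ (CharacterModule (F 0)) →
      (∀ n, Module.Injective Sᵐᵒᵖ (LinearMap.ker (dualMapOp (d n)))) →
      (∀ n, IsFlatMod.{u} S (LinearMap.ker (d n))))
    ∧
    ((∀ J : CochainComplex (ModuleCat.{u} Sᵐᵒᵖ) ℤ,
        (∃ N : ℤ, ∀ n : ℤ, N ≤ n → IsZero (J.X n)) →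
        (∀ n : ℤ, Module.Injective Sᵐᵒᵖ (J.X n)) →
        (∀ n : ℤ, J.ExactAt n) →
        Nonempty (Homotopy (𝟙 J) 0)) →
      ∀ F : CochainComplex (ModuleCat.{u} S) ℤ,
        (∃ N : ℤ, ∀ n : ℤ, n ≤ N → IsZero (F.X n)) →
        (∀ n : ℤ, IsFlatMod.{u} S (F.X n)) →
        (∀ n : ℤ, F.ExactAt n) →
        (∀ n : ℤ, IsFlatMod.{u} S (F.cycles n))) := by
  constructor
  · intro F iA iM d _hflat _hcomp hinj hker _hdualX hdual0 hdualker n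
    match n with
    | 0 =>
        haveI : Subsingleton (LinearMap.ker (d 0)) := by
          refine ⟨fun a b => Subtype.ext ?_⟩
          have ha := a.2; have hb := b.2
          rw [LinearMap.mem_ker] at ha hb
          exact hinj (ha.trans hb.symm)
        exact isFlatMod_of_dual_injective (Module.Injective.of_subsingleton Sᵐᵒᵖ _)
    | 1 =>
        have e : F 0 ≃ₗ[S] LinearMap.ker (d 1) :=
          (LinearEquiv.ofInjective (d 0) hinj).trans (LinearEquiv.ofEq _ _ (hker 0).symm)
        exact isFlatMod_of_dual_injective (Module.Injective.of_equiv (dualEquivOp e).symm hdual0)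
    | (n + 2) =>
        have equiv := dualKerEquiv (d n) (d (n + 1)) (d (n + 2)) (hker n) (hker (n + 1))
        exact isFlatMod_of_dual_injective (Module.Injective.of_equiv equiv.symm (hdualker n))
  · intro hcontr F hbound hflat hexact
    obtain ⟨Nb, hNb⟩ := hbound
    have hkr : ∀ a b c : ℤ, a + 1 = b → b + 1 = c →
        LinearMap.ker (F.d b c).hom = LinearMap.range (F.d a b).hom := by
      intro a b c hab hbc
      subst hab; subst hbc
      have hex := hexact (a + 1)
      rw [F.exactAt_iff' a (a + 1) (a + 1 + 1) (by rw [CochainComplex.prev]; try omega)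
        (by rw [CochainComplex.next]; try omega)] at hex
      rw [ShortComplex.moduleCat_exact_iff] at hex
      ext x
      rw [LinearMap.mem_ker, LinearMap.mem_range]
      constructor
      · intro hx; exact hex x hx
      · rintro ⟨y, rfl⟩
        have hdd := F.d_comp_d a (a + 1) (a + 1 + 1)
        exact congrArg (fun φ => ModuleCat.Hom.hom φ y) hdd
    let J : CochainComplex (ModuleCat.{u} Sᵐᵒᵖ) ℤ :=
      { X := fun n => ModuleCat.of Sᵐᵒᵖ (CharacterModule (F.X (-n)))
        d := fun i j => ModuleCat.ofHom (dualMapOp (F.d (-j) (-i)).hom)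
        shape := fun i j hij => by
          have h0 : F.d (-j) (-i) = 0 := F.shape _ _ (by
            simp only [ComplexShape.up_Rel] at hij ⊢
            omega)
          apply ModuleCat.hom_ext
          refine LinearMap.ext fun L => DFunLike.ext _ _ fun a => ?_
          show L ((F.d (-j) (-i)).hom a) = 0
          rw [h0]
          exact map_zero L
        d_comp_d' := fun i j k _ _ => by
          apply ModuleCat.hom_ext
          refine LinearMap.ext fun L => DFunLike.ext _ _ fun a => ?_
          show L ((F.d (-j) (-i)).hom ((F.d (-k) (-j)).hom a)) = 0
          have hdd := F.d_comp_d (-k) (-j) (-i)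
          rw [← LinearMap.comp_apply, ← ModuleCat.hom_comp, hdd]
          exact map_zero L }
    have hJb : ∃ Nj : ℤ, ∀ n, Nj ≤ n → IsZero (J.X n) := by
      refine ⟨-Nb, fun n hn => ?_⟩
      have h0 : IsZero (F.X (-n)) := hNb (-n) (by omega)
      have hid : (𝟙 (F.X (-n)) : F.X (-n) ⟶ F.X (-n)) = 0 := h0.eq_of_src _ _
      haveI hss : Subsingleton (F.X (-n) : Type u) :=
        ⟨fun a b => (congrArg (fun φ => ModuleCat.Hom.hom φ a) hid).trans
          (congrArg (fun φ => ModuleCat.Hom.hom φ b) hid).symm⟩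
      exact @ModuleCat.isZero_of_subsingleton _ _ (J.X n)
        (CharacterModule.instSubsingleton (F.X (-n)))
    have hJi : ∀ n : ℤ, Module.Injective Sᵐᵒᵖ (J.X n) := fun n =>
      dual_injective_of_isFlatMod (hflat (-n))
    have hJe : ∀ n : ℤ, J.ExactAt n := by
      intro n
      rw [J.exactAt_iff' (n - 1) n (n + 1) (by rw [CochainComplex.prev]; try omega)
        (by rw [CochainComplex.next]; try omega)]
      rw [ShortComplex.moduleCat_exact_iff]
      show ∀ L : CharacterModule ((F.X (-n) : Type u)),
        dualMapOp (F.d (-(n + 1)) (-n)).hom L = 0 →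
        ∃ L' : CharacterModule ((F.X (-(n - 1)) : Type u)),
          dualMapOp (F.d (-n) (-(n - 1))).hom L' = L
      intro L hL
      have hker' : LinearMap.ker (F.d (-n) (-(n - 1))).hom =
          LinearMap.range (F.d (-(n + 1)) (-n)).hom :=
        hkr (-(n + 1)) (-n) (-(n - 1)) (by omega) (by omega)
      have hvan : ∀ b ∈ (LinearMap.ker (F.d (-n) (-(n - 1))).hom).toAddSubgroup, L b = 0 := by
        intro b hb
        rw [Submodule.mem_toAddSubgroup, hker', LinearMap.mem_range] at hb
        obtain ⟨a, rfl⟩ := hb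
        exact DFunLike.congr_fun hL a
      let Lq : CharacterModule ((F.X (-n) : Type u) ⧸ LinearMap.ker (F.d (-n) (-(n - 1))).hom) :=
        QuotientAddGroup.lift (LinearMap.ker (F.d (-n) (-(n - 1))).hom).toAddSubgroup L hvan
      let e := LinearMap.quotKerEquivRange (F.d (-n) (-(n - 1))).hom
      let L₁ : CharacterModule (LinearMap.range (F.d (-n) (-(n - 1))).hom) :=
        Lq.comp e.symm.toLinearMap.toAddMonoidHom
      obtain ⟨L', hL'⟩ := CharacterModule.dual_surjective_of_injective
        ((LinearMap.range (F.d (-n) (-(n - 1))).hom).subtype.toAddMonoidHom.toIntLinearMap)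
        (fun x y hxy => Subtype.ext hxy) L₁
      refine ⟨L', ?_⟩
      refine DFunLike.ext _ _ fun x => ?_
      show L' ((F.d (-n) (-(n - 1))).hom x) = L x
      have hx : (F.d (-n) (-(n - 1))).hom x ∈ LinearMap.range (F.d (-n) (-(n - 1))).hom :=
        LinearMap.mem_range_self _ x
      have h1 : L' ((F.d (-n) (-(n - 1))).hom x) = L₁ ⟨(F.d (-n) (-(n - 1))).hom x, hx⟩ :=
        DFunLike.congr_fun hL' ⟨(F.d (-n) (-(n - 1))).hom x, hx⟩
      rw [h1]
      show Lq (e.symm ⟨(F.d (-n) (-(n - 1))).hom x, hx⟩) = L x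
      have h2 : e.symm ⟨(F.d (-n) (-(n - 1))).hom x, hx⟩ = Submodule.Quotient.mk x := by
        rw [LinearEquiv.symm_apply_eq]
        exact Subtype.ext (LinearMap.quotKerEquivRange_apply_mk _ _).symm
      rw [h2]
      rfl
    obtain ⟨ht⟩ := hcontr J hJb hJi hJe
    have hZ : ∀ a b : ℤ, a + 1 = b →
        Module.Injective Sᵐᵒᵖ (LinearMap.ker (dualMapOp (F.d a b).hom)) := by
      intro a b hab
      have h1 : -(-b + 1) = a := by omega
      have h2 : -(-b) = b := by omega
      have main : Module.Injective Sᵐᵒᵖ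
          (LinearMap.ker (dualMapOp (F.d (-(-b + 1)) (-(-b))).hom)) := by
        set i : ℤ := -b with hi
        have hmem : ∀ c : (J.X (i - 1) : Type u),
            (J.d (i - 1) i).hom c ∈ LinearMap.ker (dualMapOp (F.d (-(i + 1)) (-i)).hom) := by
          intro c
          rw [LinearMap.mem_ker]
          have hdd := J.d_comp_d (i - 1) i (i + 1)
          exact congrArg (fun φ => ModuleCat.Hom.hom φ c) hdd
        refine Module.Injective.of_retract
          (s := (ht.hom i (i - 1)).hom.comp (Submodule.subtype _))
          (r := LinearMap.codRestrict _ (J.d (i - 1) i).hom hmem) ?_ (hJi (i - 1))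
        intro z
        refine Subtype.ext ?_
        have hz : (J.d i (i + 1)).hom z.val = 0 := z.2
        have hcomm := ht.comm i
        rw [dNext_eq ht.hom (show (ComplexShape.up ℤ).Rel i (i + 1) from rfl),
          prevD_eq ht.hom (show (ComplexShape.up ℤ).Rel (i - 1) i by
            show i - 1 + 1 = i; omega)] at hcomm
        have hcomm' : (LinearMap.id : (J.X i : Type u) →ₗ[Sᵐᵒᵖ] (J.X i : Type u)) =
            (LinearMap.comp (ht.hom (i + 1) i).hom (J.d i (i + 1)).hom :
              (J.X i : Type u) →ₗ[Sᵐᵒᵖ] (J.X i : Type u)) +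
            LinearMap.comp (J.d (i - 1) i).hom (ht.hom i (i - 1)).hom + 0 :=
          congrArg ModuleCat.Hom.hom hcomm
        have happ := LinearMap.congr_fun hcomm' z.val
        rw [LinearMap.add_apply, LinearMap.add_apply, LinearMap.comp_apply, LinearMap.comp_apply,
          LinearMap.zero_apply, LinearMap.id_apply] at happ
        have hz' : (J.d i (i + 1)).hom z.val = 0 :=
          z.2
        rw [hz', map_zero, zero_add, add_zero] at happ
        show (J.d (i - 1) i).hom ((ht.hom i (i - 1)).hom z.val) = z.val
        exact happ.symm
      rw [h1, h2] at main
      exact main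
    intro m
    have hinj1 := hZ (m - 2) (m - 1) (by omega)
    have equiv := dualKerEquiv (F.d (m - 2) (m - 1)).hom (F.d (m - 1) m).hom (F.d m (m + 1)).hom
      (hkr (m - 2) (m - 1) m (by omega) (by omega))
      (hkr (m - 1) m (m + 1) (by omega) (by omega))
    have hinj2 : Module.Injective Sᵐᵒᵖ (CharacterModule (LinearMap.ker (F.d m (m + 1)).hom)) :=
      Module.Injective.of_equiv equiv.symm hinj1
    have eC : (F.cycles m : Type u) ≃ₗ[S] LinearMap.ker (F.d m (m + 1)).hom :=
      ((F.cyclesIsoSc' (m - 1) m (m + 1) (by rw [CochainComplex.prev]; try omega)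
        (by rw [CochainComplex.next]; try omega)).trans
        (F.sc' (m - 1) m (m + 1)).moduleCatCyclesIso).toLinearEquiv
    exact isFlatMod_of_dual_injective (Module.Injective.of_equiv (dualEquivOp eC) hinj2)
end

section
/- Let R = k[x_α : α ∈ A] be the polynomial ring in an infinite set of variables over a field k, and let k be the R-module on which all variables act by zero. Then for any flat R-module P and all integers n ≥ 0, Ext^n_R(k, P) = 0. -/
open CategoryTheory MvPolynomial Function LinearMap

set_option linter.unusedSectionVars false
set_option linter.unusedVariables false
set_option maxHeartbeats 1000000

universe u

namespace DualRickard

variable {k : Type u} [Field k] {A : Type u} [Infinite A] [DecidableEq A]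


/-- The ideal generated by the variables in `S`. -/
noncomputable def idl (S : Finset A) : Ideal (MvPolynomial A k) := Ideal.span (MvPolynomial.X '' (S : Set A))

/-- `X β` is a nonzerodivisor modulo the ideal generated by other variables. -/
lemma nzd_mod_idl {S : Finset A} {β : A} (hβ : β ∉ S) {f : MvPolynomial A k}
    (h : MvPolynomial.X β * f ∈ idl (k := k) S) : f ∈ idl (k := k) S := by
  rw [idl, mem_ideal_span_X_image] at h ⊢
  intro m hm
  have hmem : Finsupp.single β 1 + m ∈ (MvPolynomial.X β * f).support := by
    rw [MvPolynomial.mem_support_iff, MvPolynomial.coeff_X_mul]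
    exact MvPolynomial.mem_support_iff.1 hm
  obtain ⟨i, hiS, hi⟩ := h _ hmem
  refine ⟨i, hiS, ?_⟩
  have hne : i ≠ β := fun e => hβ (e ▸ hiS)
  simpa [Finsupp.single_apply, hne.symm] using hi

/-- Multiplication by `X β` is injective on `MvPolynomial A k ⧸ idl S`. -/
lemma inj_smul_quot {S : Finset A} {β : A} (hβ : β ∉ S) :
    Function.Injective (fun g : (MvPolynomial A k) ⧸ idl (k := k) S => (MvPolynomial.X β : MvPolynomial A k) • g) := by
  intro a b hab
  obtain ⟨f, rfl⟩ := Submodule.Quotient.mk_surjective _ a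
  obtain ⟨g, rfl⟩ := Submodule.Quotient.mk_surjective _ b
  simp only [← Submodule.Quotient.mk_smul] at hab
  rw [Submodule.Quotient.eq] at hab ⊢
  have : MvPolynomial.X β * (f - g) ∈ idl (k := k) S := by
    rw [mul_sub]
    simpa [smul_eq_mul] using hab
  exact nzd_mod_idl hβ this


variable {P : Type u} [AddCommGroup P] [Module (MvPolynomial A k) P]

/-- Submodule `(idl S) • P`. -/
noncomputable def NS (S : Finset A) (P : Type u) [AddCommGroup P] [Module (MvPolynomial A k) P] :
    Submodule (MvPolynomial A k) P := idl (k := k) S • (⊤ : Submodule (MvPolynomial A k) P)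

/-- `X β` acts injectively on a quotient of a flat module by finitely many variables. -/
lemma inj_smul_flat_quot [Module.Flat (MvPolynomial A k) P] {S : Finset A} {β : A} (hβ : β ∉ S) :
    Function.Injective (fun q : P ⧸ NS (k := k) S P => (MvPolynomial.X β : MvPolynomial A k) • q) := by
  -- transfer through quotTensorEquivQuotSMul
  let e : TensorProduct (MvPolynomial A k) (MvPolynomial A k ⧸ idl (k := k) S) P ≃ₗ[MvPolynomial A k] P ⧸ NS (k := k) S P :=
    TensorProduct.quotTensorEquivQuotSMul P (idl (k := k) S)
  have key : Function.Injective
      (fun t : TensorProduct (MvPolynomial A k) (MvPolynomial A k ⧸ idl (k := k) S) P => (MvPolynomial.X β : MvPolynomial A k) • t) := by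
    have h1 : (fun t : TensorProduct (MvPolynomial A k) (MvPolynomial A k ⧸ idl (k := k) S) P => (MvPolynomial.X β : MvPolynomial A k) • t)
        = ⇑(LinearMap.rTensor P ((MvPolynomial.X β : MvPolynomial A k) • LinearMap.id)) := by
      rw [LinearMap.rTensor_smul, LinearMap.rTensor_id]; rfl
    rw [h1]
    apply Module.Flat.rTensor_preserves_injective_linearMap
    intro a b hab
    exact inj_smul_quot hβ (by simpa using hab)
  intro a b hab
  have hab' : (MvPolynomial.X β : MvPolynomial A k) • a = (MvPolynomial.X β : MvPolynomial A k) • b := hab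
  have : e.symm ((MvPolynomial.X β : MvPolynomial A k) • a)
      = e.symm ((MvPolynomial.X β : MvPolynomial A k) • b) := by
    rw [hab']
  rw [map_smul, map_smul] at this
  exact e.symm.injective (key this)

/-- transfer injectivity along an arbitrary surjection with kernel `NS S P`. -/
noncomputable def quotEquiv {S : Finset A} {Q : Type u} [AddCommGroup Q] [Module (MvPolynomial A k) Q]
    (ρ : P →ₗ[MvPolynomial A k] Q) (hs : Surjective ρ) (hker : LinearMap.ker ρ = NS (k := k) S P) :
    (P ⧸ NS (k := k) S P) ≃ₗ[MvPolynomial A k] Q :=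
  LinearEquiv.ofBijective ((NS (k := k) S P).liftQ ρ (le_of_eq hker.symm))
    ⟨by rw [← LinearMap.ker_eq_bot]
        exact Submodule.ker_liftQ_eq_bot _ _ _ (le_of_eq hker),
     fun q => by obtain ⟨p, rfl⟩ := hs q; exact ⟨Submodule.Quotient.mk p, rfl⟩⟩

lemma quotEquiv_mk {S : Finset A} {Q : Type u} [AddCommGroup Q] [Module (MvPolynomial A k) Q]
    (ρ : P →ₗ[MvPolynomial A k] Q) (hs : Surjective ρ) (hker : LinearMap.ker ρ = NS (k := k) S P) (p : P) :
    quotEquiv ρ hs hker (Submodule.Quotient.mk p) = ρ p := rfl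

lemma inj_smul_gen [Module.Flat (MvPolynomial A k) P] {S : Finset A} {β : A} (hβ : β ∉ S)
    {Q : Type u} [AddCommGroup Q] [Module (MvPolynomial A k) Q]
    (ρ : P →ₗ[MvPolynomial A k] Q) (hs : Surjective ρ) (hker : LinearMap.ker ρ = NS (k := k) S P) :
    Function.Injective (fun q : Q => (MvPolynomial.X β : MvPolynomial A k) • q) := by
  intro a b hab
  have hab' : (MvPolynomial.X β : MvPolynomial A k) • a = (MvPolynomial.X β : MvPolynomial A k) • b := hab
  set e := quotEquiv (k := k) ρ hs hker
  have : e.symm ((MvPolynomial.X β : MvPolynomial A k) • a)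
      = e.symm ((MvPolynomial.X β : MvPolynomial A k) • b) := by rw [hab']
  rw [map_smul, map_smul] at this
  exact e.symm.injective (inj_smul_flat_quot hβ this)

/-- Decomposition of membership in `NS (insert β S)`. -/
lemma mem_NS_insert {S : Finset A} {β : A} {p : P}
    (hp : p ∈ NS (k := k) (insert β S) P) :
    ∃ p₁ ∈ NS (k := k) S P, ∃ p₂ : P, p = p₁ + (MvPolynomial.X β : MvPolynomial A k) • p₂ := by
  have hspan : idl (k := k) (insert β S)
      = Ideal.span {(MvPolynomial.X β : MvPolynomial A k)} ⊔ idl (k := k) S := by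
    rw [idl, idl, Finset.coe_insert, Set.image_insert_eq, Ideal.span_insert]
  rw [NS, hspan, Submodule.sup_smul] at hp
  obtain ⟨a, ha, b, hb, rfl⟩ := Submodule.mem_sup.1 hp
  -- a ∈ span {X β} • ⊤
  have : ∃ m : P, a = (MvPolynomial.X β : MvPolynomial A k) • m := by
    refine Submodule.smul_induction_on ha ?_ ?_
    · intro r hr n _
      obtain ⟨c, hc⟩ := Ideal.mem_span_singleton'.1 hr
      exact ⟨c • n, by rw [← hc, mul_comm, mul_smul]⟩
    · rintro x y ⟨mx, rfl⟩ ⟨my, rfl⟩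
      exact ⟨mx + my, by rw [smul_add]⟩
  obtain ⟨m, rfl⟩ := this
  exact ⟨b, hb, m, by rw [add_comm]⟩

lemma smul_mem_NS_insert {S : Finset A} {β : A} (p : P) :
    (MvPolynomial.X β : MvPolynomial A k) • p ∈ NS (k := k) (insert β S) P := by
  apply Submodule.smul_mem_smul _ Submodule.mem_top
  exact Ideal.subset_span ⟨β, by simp, rfl⟩

lemma NS_le_insert {S : Finset A} {β : A} : NS (k := k) S P ≤ NS (k := k) (insert β S) P := by
  apply Submodule.smul_mono_left
  rw [idl, idl]
  exact Ideal.span_mono (Set.image_mono (by simp))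


lemma NS_empty (P : Type u) [AddCommGroup P] [Module (MvPolynomial A k) P] :
    NS (k := k) (∅ : Finset A) P = ⊥ := by
  rw [NS, idl]
  simp [Ideal.span_empty, Submodule.bot_smul]


/-- lifting through the range of a map using projectivity -/
lemma lift_through_range {Rr : Type u} [CommRing Rr] {W M N : Type u}
    [AddCommGroup W] [Module Rr W] [AddCommGroup M] [Module Rr M]
    [AddCommGroup N] [Module Rr N] [Module.Projective Rr W]
    (g : M →ₗ[Rr] N) (f : W →ₗ[Rr] N) (hf : ∀ w, f w ∈ LinearMap.range g) :
    ∃ h : W →ₗ[Rr] M, g.comp h = f := by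
  obtain ⟨h, hh⟩ := Module.projective_lifting_property g.rangeRestrict
    (f.codRestrict (LinearMap.range g) hf) g.surjective_rangeRestrict
  refine ⟨h, ?_⟩
  ext w
  have h2 := congrArg Subtype.val (LinearMap.congr_fun hh w)
  simpa using h2

section Resolution

variable (M : ModuleCat.{u} (MvPolynomial A k))
variable (res : ProjectiveResolution M)

lemma projX (n : ℕ) : Module.Projective (MvPolynomial A k) (res.complex.X n) := by
  have := res.projective n
  exact (IsProjective.iff_projective (res.complex.X n)).mpr this

variable (hM : ∀ (β : A) (c : M), (MvPolynomial.X β : MvPolynomial A k) • c = 0)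

lemma d_comp_d_apply (i j l : ℕ) (x : res.complex.X i) :
    res.complex.d j l (res.complex.d i j x) = 0 := by
  have := res.complex.d_comp_d i j l
  exact congrFun (congrArg (fun (t : res.complex.X i ⟶ res.complex.X l)
    => (t : res.complex.X i → res.complex.X l)) this) x

lemma exact_succ_apply (n : ℕ) (z : res.complex.X (n+1))
    (hz : res.complex.d (n+1) n z = 0) :
    ∃ y : res.complex.X (n+2), res.complex.d (n+2) (n+1) y = z :=
  (ShortComplex.moduleCat_exact_iff _).1 (res.exact_succ n) z hz

include hM in
/-- The degree-0 homotopy: `d 1 0 ∘ h₀ = X β • id`. -/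
lemma homotopy_zero (β : A) :
    ∃ h₀ : res.complex.X 0 →ₗ[MvPolynomial A k] res.complex.X 1,
      ∀ e : res.complex.X 0,
        res.complex.d 1 0 (h₀ e) = (MvPolynomial.X β : MvPolynomial A k) • e := by
  have hproj := projX M res 0
  have hmem : ∀ e : res.complex.X 0,
      ((MvPolynomial.X β : MvPolynomial A k) • (LinearMap.id (R := MvPolynomial A k) (M := res.complex.X 0))) e
        ∈ LinearMap.range (res.complex.d 1 0).hom := by
    intro e
    apply (ShortComplex.moduleCat_exact_iff _).1 res.exact₀
    show res.π.f 0 ((MvPolynomial.X β : MvPolynomial A k) • e) = 0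
    rw [map_smul]
    exact hM β _
  obtain ⟨h₀, hh₀⟩ := lift_through_range
    (res.complex.d 1 0).hom
    ((MvPolynomial.X β : MvPolynomial A k) • (LinearMap.id (R := MvPolynomial A k) (M := res.complex.X 0))) hmem
  exact ⟨h₀, fun e => LinearMap.congr_fun hh₀ e⟩

include hM in
/-- The homotopy fact in all degrees. -/
lemma homotopy_step (β : A) (n : ℕ) :
    ∃ a : res.complex.X n →ₗ[MvPolynomial A k] res.complex.X (n+1),
      ∀ z : res.complex.X (n+1),
        (MvPolynomial.X β : MvPolynomial A k) • z - a (res.complex.d (n+1) n z)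
          ∈ LinearMap.range
            (res.complex.d (n+2) (n+1)).hom := by
  induction n with
  | zero =>
    obtain ⟨h₀, hh₀⟩ := homotopy_zero M res hM β
    refine ⟨h₀, fun z => ?_⟩
    apply (ShortComplex.moduleCat_exact_iff _).1 (res.exact_succ 0)
    show res.complex.d 1 0 _ = 0
    rw [map_sub, map_smul, hh₀]
    rw [sub_eq_zero]
  | succ n ih =>
    obtain ⟨a, ha⟩ := ih
    have hproj := projX M res (n+1)
    -- lift u := X β • id - a ∘ d to b : C_{n+1} → C_{n+2}
    have hmem : ∀ z : res.complex.X (n+1),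
        ((MvPolynomial.X β : MvPolynomial A k) • (LinearMap.id (R := MvPolynomial A k) (M := res.complex.X (n+1)))
          - a.comp (res.complex.d (n+1) n).hom) z
        ∈ LinearMap.range
          (res.complex.d (n+2) (n+1)).hom := fun z => ha z
    obtain ⟨b, hb⟩ := lift_through_range
      (res.complex.d (n+2) (n+1)).hom _ hmem
    refine ⟨b, fun z => ?_⟩
    apply exact_succ_apply M res (n+1)
    have hbz := LinearMap.congr_fun hb (res.complex.d (n+2) (n+1) z)
    simp only [LinearMap.comp_apply, LinearMap.sub_apply, LinearMap.smul_apply,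
      LinearMap.id_apply] at hbz
    rw [map_sub, map_smul, hbz]
    rw [d_comp_d_apply M res (n+2) (n+1) n]
    simp only [map_zero, map_sub, map_smul, sub_zero]
    abel

end Resolution


section Main

variable (P : Type u) [AddCommGroup P] [Module (MvPolynomial A k) P]
  [Module.Flat (MvPolynomial A k) P]
variable (M : ModuleCat.{u} (MvPolynomial A k)) (res : ProjectiveResolution M)
variable (hM : ∀ (β : A) (c : M), (MvPolynomial.X β : MvPolynomial A k) • c = 0)

include hM in
/-- The main induction: every cocycle with values in a quotient of a flat module by
finitely many variables is a coboundary. -/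
lemma main_exact (n : ℕ) :
    ∀ (S : Finset A) (Q : Type u) [AddCommGroup Q] [Module (MvPolynomial A k) Q]
      (ρ : P →ₗ[MvPolynomial A k] Q) (hs : Surjective ρ)
      (hker : LinearMap.ker ρ = NS (k := k) S P)
      (φ : res.complex.X n →ₗ[MvPolynomial A k] Q),
      φ.comp (res.complex.d (n+1) n).hom = 0 →
      ∃ ψ : res.complex.X (n-1) →ₗ[MvPolynomial A k] Q,
        ψ.comp (res.complex.d n (n-1)).hom = φ := by
  induction n with
  | zero =>
    intro S Q _ _ ρ hs hker φ hφ
    obtain ⟨β, hβ⟩ := Infinite.exists_notMem_finset S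
    obtain ⟨h₀, hh₀⟩ := homotopy_zero M res hM β
    have hφ0 : φ = 0 := by
      ext e
      apply inj_smul_gen (P := P) hβ ρ hs hker
      show (MvPolynomial.X β : MvPolynomial A k) • φ e
        = (MvPolynomial.X β : MvPolynomial A k) • ((0 : _ →ₗ[MvPolynomial A k] Q) e)
      rw [LinearMap.zero_apply, smul_zero, ← map_smul, ← hh₀ e]
      exact LinearMap.congr_fun hφ (h₀ e)
    exact ⟨0, by rw [hφ0]; ext z; simp⟩
  | succ n ih =>
    intro S Q _ _ ρ hs hker φ hφ
    obtain ⟨β, hβ⟩ := Infinite.exists_notMem_finset S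
    obtain ⟨a, ha⟩ := homotopy_step M res hM β n
    have hreg := inj_smul_gen (P := P) hβ ρ hs hker
    -- σ = φ ∘ a  satisfies  σ ∘ d = X β • φ
    set σ : res.complex.X n →ₗ[MvPolynomial A k] Q := φ.comp a with hσ
    have fact1 : ∀ z : res.complex.X (n+1),
        σ (res.complex.d (n+1) n z) = (MvPolynomial.X β : MvPolynomial A k) • φ z := by
      intro z
      obtain ⟨y, hy⟩ := ha z
      have : φ ((MvPolynomial.X β : MvPolynomial A k) • z - a (res.complex.d (n+1) n z)) = 0 := by
        rw [← hy]
        exact LinearMap.congr_fun hφ y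
      rw [map_sub, map_smul, sub_eq_zero] at this
      exact this.symm
    -- the quotient by one more variable
    have hle : NS (k := k) S P ≤
        (NS (k := k) (insert β S) P).comap (LinearMap.id (R := MvPolynomial A k) (M := P)) :=
      fun x hx => NS_le_insert (k := k) hx
    set eQ := quotEquiv (k := k) ρ hs hker with heQ
    set π : Q →ₗ[MvPolynomial A k] (P ⧸ NS (k := k) (insert β S) P) :=
      (Submodule.mapQ _ _ (LinearMap.id (R := MvPolynomial A k) (M := P)) hle).comp
        (eQ.symm.toLinearMap) with hπ
    have hπρ : ∀ p : P, π (ρ p) = Submodule.Quotient.mk p := by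
      intro p
      have h1 : eQ.symm (ρ p) = Submodule.Quotient.mk p := by
        rw [LinearEquiv.symm_apply_eq]
        exact (quotEquiv_mk ρ hs hker p).symm
      show Submodule.mapQ _ _ _ hle (eQ.symm (ρ p)) = _
      rw [h1, Submodule.mapQ_apply, LinearMap.id_apply]
    have hπs : Surjective π := by
      intro q''
      obtain ⟨p, rfl⟩ := Submodule.Quotient.mk_surjective _ q''
      exact ⟨ρ p, hπρ p⟩
    have hπsmul : ∀ q : Q, π ((MvPolynomial.X β : MvPolynomial A k) • q) = 0 := by
      intro q
      obtain ⟨p, rfl⟩ := hs q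
      rw [← map_smul, hπρ]
      rw [Submodule.Quotient.mk_eq_zero]
      exact smul_mem_NS_insert (k := k) p
    -- apply the inductive hypothesis to π ∘ σ
    have cocycle : (π.comp σ).comp (res.complex.d (n+1) n).hom = 0 := by
      ext z
      show π (σ (res.complex.d (n+1) n z)) = 0
      rw [fact1 z]
      exact hπsmul (φ z)
    obtain ⟨τ, hτ⟩ := ih (insert β S) (P ⧸ NS (k := k) (insert β S) P)
      (NS (k := k) (insert β S) P).mkQ (Submodule.Quotient.mk_surjective _)
      (Submodule.ker_mkQ _) (π.comp σ) cocycle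
    -- lift τ through π
    have hprojn : Module.Projective (MvPolynomial A k) (res.complex.X (n-1)) := projX M res (n-1)
    obtain ⟨τ', hτ'⟩ := Module.projective_lifting_property π τ hπs
    -- u = σ - τ' ∘ d  lands in ker π = X β • Q
    set u : res.complex.X n →ₗ[MvPolynomial A k] Q :=
      σ - τ'.comp (res.complex.d n (n-1)).hom with hu
    have hπu : ∀ e : res.complex.X n, π (u e) = 0 := by
      intro e
      have h1 : π (τ' (res.complex.d n (n-1) e)) = τ (res.complex.d n (n-1) e) :=
        LinearMap.congr_fun hτ' (res.complex.d n (n-1) e)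
      have h2 : τ (res.complex.d n (n-1) e) = π (σ e) := LinearMap.congr_fun hτ e
      show π (σ e - τ' (res.complex.d n (n-1) e)) = 0
      rw [map_sub, h1, h2, sub_self]
    -- every element of ker π is divisible by X β
    have hdiv : ∀ q : Q, π q = 0 → ∃ v : Q, (MvPolynomial.X β : MvPolynomial A k) • v = q := by
      intro q hq
      obtain ⟨p, rfl⟩ := hs q
      rw [hπρ p, Submodule.Quotient.mk_eq_zero] at hq
      obtain ⟨p₁, hp₁, p₂, rfl⟩ := mem_NS_insert (k := k) hq
      refine ⟨ρ p₂, ?_⟩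
      have : ρ p₁ = 0 := by
        rw [← LinearMap.mem_ker, hker]; exact hp₁
      rw [map_add, this, zero_add, map_smul]
    -- define the linear "division by X β" of u
    set μ : Q →ₗ[MvPolynomial A k] Q :=
      (MvPolynomial.X β : MvPolynomial A k) • LinearMap.id with hμ
    have hμinj : Function.Injective μ := hreg
    have humem : ∀ e : res.complex.X n, u e ∈ LinearMap.range μ := by
      intro e
      obtain ⟨v, hv⟩ := hdiv (u e) (hπu e)
      exact ⟨v, hv⟩
    set ψ : res.complex.X n →ₗ[MvPolynomial A k] Q :=
      ((LinearEquiv.ofInjective μ hμinj).symm.toLinearMap).comp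
        (u.codRestrict (LinearMap.range μ) humem) with hψ
    have hψkey : ∀ e : res.complex.X n, (MvPolynomial.X β : MvPolynomial A k) • ψ e = u e := by
      intro e
      have h1 : μ (ψ e) = u e := by
        have h2 : (LinearEquiv.ofInjective μ hμinj) (ψ e)
            = u.codRestrict (LinearMap.range μ) humem e := by
          show (LinearEquiv.ofInjective μ hμinj)
            ((LinearEquiv.ofInjective μ hμinj).symm _) = _
          rw [LinearEquiv.apply_symm_apply]
        have h3 := congrArg Subtype.val h2
        rwa [LinearEquiv.ofInjective_apply] at h3
      exact h1
    refine ⟨ψ, ?_⟩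
    ext z
    show ψ (res.complex.d (n+1) n z) = φ z
    apply hreg
    show (MvPolynomial.X β : MvPolynomial A k) • ψ (res.complex.d (n+1) n z)
      = (MvPolynomial.X β : MvPolynomial A k) • φ z
    rw [hψkey]
    show σ (res.complex.d (n+1) n z) - τ' (res.complex.d n (n-1) (res.complex.d (n+1) n z)) = _
    rw [d_comp_d_apply M res (n+1) n (n-1) z, map_zero, sub_zero, fact1 z]




include hM in
lemma exactK (n : ℕ) :
    (res.complex.linearYonedaObj (MvPolynomial A k)
      (ModuleCat.of (MvPolynomial A k) P)).ExactAt n := by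
  set K := res.complex.linearYonedaObj (MvPolynomial A k) (ModuleCat.of (MvPolynomial A k) P)
    with hK
  have hker : LinearMap.ker (LinearMap.id (R := MvPolynomial A k) (M := P))
      = NS (k := k) (∅ : Finset A) P := by
    rw [LinearMap.ker_id, NS_empty]
  cases n with
  | zero =>
    rw [HomologicalComplex.exactAt_iff' K 0 0 1 (by simp)
      ((ComplexShape.up ℕ).next_eq' rfl)]
    rw [ShortComplex.moduleCat_exact_iff]
    intro φ hφ
    have hφ' : (φ.hom : res.complex.X 0 →ₗ[MvPolynomial A k] P).comp
        (res.complex.d 1 0).hom = 0 := congrArg ModuleCat.Hom.hom hφ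
    obtain ⟨ψ, hψ⟩ := main_exact P M res hM 0 ∅ P LinearMap.id surjective_id hker φ.hom hφ'
    refine ⟨0, ?_⟩
    apply ModuleCat.hom_ext
    rw [← hψ]
    have hd00 : res.complex.d 0 0 = 0 := res.complex.shape 0 0 (by simp)
    show (0 : _ →ₗ[MvPolynomial A k] _) = ψ.comp (res.complex.d 0 0).hom
    rw [hd00]
    ext e
    simp
  | succ m =>
    rw [HomologicalComplex.exactAt_iff' K m (m+1) (m+2) (CochainComplex.prev_nat_succ m)
      ((ComplexShape.up ℕ).next_eq' rfl)]
    rw [ShortComplex.moduleCat_exact_iff]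
    intro φ hφ
    have hφ' : (φ.hom : res.complex.X (m+1) →ₗ[MvPolynomial A k] P).comp
        (res.complex.d (m+2) (m+1)).hom = 0 := congrArg ModuleCat.Hom.hom hφ
    obtain ⟨ψ, hψ⟩ := main_exact P M res hM (m+1) ∅ P LinearMap.id surjective_id hker φ.hom hφ'
    exact ⟨ModuleCat.ofHom ψ, ModuleCat.hom_ext hψ⟩

end Main
end DualRickard

open DualRickard in
/-- Dual Rickard theorem: over the polynomial ring `R = k[x_α : α ∈ A]` in an infinite set of
variables over a field `k`, with `k` the `R`-module on which every variable acts by zero,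
one has `Ext^n_R(k, P) = 0` for every flat `R`-module `P` and all `n ≥ 0`. -/
theorem ext_trivial_flat_vanishes (k : Type u) [Field k] (A : Type u) [Infinite A]
    (P : Type u) [AddCommGroup P] [Module (MvPolynomial A k) P]
    (hP : Module.Flat (MvPolynomial A k) P) (n : ℕ) :
    letI : Module (MvPolynomial A k) k :=
      Module.compHom k (MvPolynomial.eval (fun _ : A => (0 : k)))
    Subsingleton
      ((((Ext (MvPolynomial A k) (ModuleCat.{u} (MvPolynomial A k)) n).obj
        (Opposite.op (ModuleCat.of (MvPolynomial A k) k))).obj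
        (ModuleCat.of (MvPolynomial A k) P))) := by
  letI : Module (MvPolynomial A k) k :=
    Module.compHom k (MvPolynomial.eval (fun _ : A => (0 : k)))
  letI : DecidableEq A := Classical.decEq A
  letI := hP
  set M : ModuleCat.{u} (MvPolynomial A k) := ModuleCat.of (MvPolynomial A k) k with hMdef
  have hM : ∀ (β : A) (c : M), (MvPolynomial.X β : MvPolynomial A k) • c = 0 := by
    have key : ∀ (β : A) (c : k), (MvPolynomial.X β : MvPolynomial A k) • c = (0 : k) := by
      intro β c
      show MvPolynomial.eval (fun _ : A => (0 : k)) (MvPolynomial.X β) • c = 0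
      rw [MvPolynomial.eval_X, zero_smul]
    exact fun β c => key β c
  obtain ⟨res⟩ := (inferInstance : HasProjectiveResolution M).out
  have hex := exactK P M res hM n
  have hz : Limits.IsZero ((res.complex.linearYonedaObj (MvPolynomial A k)
      (ModuleCat.of (MvPolynomial A k) P)).homology n) := by
    rwa [← HomologicalComplex.exactAt_iff_isZero_homology]
  have hzExt := Limits.IsZero.of_iso hz
    (res.isoExt n (ModuleCat.of (MvPolynomial A k) P))
  constructor
  intro a b
  have hid : 𝟙 ((((Ext (MvPolynomial A k) (ModuleCat.{u} (MvPolynomial A k)) n).obj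
        (Opposite.op M)).obj (ModuleCat.of (MvPolynomial A k) P))) = 0 :=
    hzExt.eq_of_src _ _
  calc a = (𝟙 ((((Ext (MvPolynomial A k) (ModuleCat.{u} (MvPolynomial A k)) n).obj
        (Opposite.op M)).obj (ModuleCat.of (MvPolynomial A k) P)))) a := rfl
    _ = 0 := by rw [hid]; rfl
    _ = (𝟙 ((((Ext (MvPolynomial A k) (ModuleCat.{u} (MvPolynomial A k)) n).obj
        (Opposite.op M)).obj (ModuleCat.of (MvPolynomial A k) P)))) b := by rw [hid]; rfl
    _ = b := rfl
end

section
/- Let W be a k-vector space and Sym(W) the symmetric coalgebra. The complex 0 → k → Sym(W) → Sym(W) ⊗ W → Sym(W) ⊗ Λ²(W) → ⋯ → Sym(W) ⊗ Λⁿ(W) → ⋯, with differential given by the composition of the map induced by the comultiplication Sym(W) → Sym(W) ⊗ W with the map induced by the exterior multiplication W ⊗ Λⁿ(W) → Λⁿ⁺¹(W), is exact. -/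
universe u

section SymKoszul

variable (k : Type u) [Field k] (ι : Type u) [LinearOrder ι]

/-- The degree-`n` term `Sym(W) ⊗ Λⁿ(W)` of the dual Koszul complex of the symmetric
coalgebra `Sym(W)` of a vector space `W` with basis indexed by `ι`, presented in the basis
consisting of pairs (divided-power monomial, `n`-element subset of `ι`).  (Here `Sym(W)` is
the symmetric coalgebra, i.e. the subcoalgebra of symmetric tensors of the tensor coalgebra,
with its basis of divided-power monomials `ι →₀ ℕ`, and `Λⁿ(W)` has its basis of `n`-element
subsets of `ι`.) -/
def SymKos (n : ℕ) : Type u := ((ι →₀ ℕ) × {s : Finset ι // s.card = n}) →₀ k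

noncomputable instance (n : ℕ) : AddCommGroup (SymKos k ι n) := Finsupp.instAddCommGroup

noncomputable instance (n : ℕ) : Module k (SymKos k ι n) := Finsupp.module _ _

/-- The differential `Sym(W) ⊗ Λⁿ(W) → Sym(W) ⊗ Λⁿ⁺¹(W)`, the composition of the map induced
by the comultiplication `Sym(W) → Sym(W) ⊗ W` with the map induced by the exterior
multiplication `W ⊗ Λⁿ(W) → Λⁿ⁺¹(W)`; on the divided-power basis it sends `(μ, s)` to
`∑_{α ∈ supp μ, α ∉ s} ± (μ - δ_α, s ∪ {α})`. -/
noncomputable def symKosDiff (n : ℕ) : SymKos k ι n →ₗ[k] SymKos k ι (n + 1) :=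
  Finsupp.lsum k fun p => LinearMap.toSpanSingleton k (SymKos k ι (n + 1))
    (∑ α ∈ (p.1.support \ p.2.1).attach,
      ((-1 : k) ^ ((p.2.1.filter (fun β => β < α.1)).card)) •
        Finsupp.single
          (p.1 - Finsupp.single α.1 1,
            ⟨insert α.1 p.2.1, by
              rw [Finset.card_insert_of_notMem (Finset.mem_sdiff.mp α.2).2, p.2.2]⟩)
          (1 : k))

/-- The coaugmentation `k → Sym(W)` (the inclusion of the degree-zero component),
composed with the identification `Sym(W) = Sym(W) ⊗ Λ⁰(W)`. -/
noncomputable def symKosUnit : k →ₗ[k] SymKos k ι 0 :=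
  LinearMap.toSpanSingleton k (SymKos k ι 0)
    (Finsupp.single (0, ⟨(∅ : Finset ι), rfl⟩) (1 : k))

end SymKoszul

namespace SKP

variable {k : Type u} [Field k] {ι : Type u} [LinearOrder ι]

abbrev M (k ι : Type u) [Field k] [LinearOrder ι] : Type u := ((ι →₀ ℕ) × Finset ι) →₀ k

noncomputable def e (k : Type u) [Field k] {ι : Type u} [LinearOrder ι]
    (μ : ι →₀ ℕ) (s : Finset ι) : M k ι := Finsupp.single (μ, s) 1

def sgn (k : Type u) [Field k] {ι : Type u} [LinearOrder ι] (s : Finset ι) (α : ι) : k :=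
  (-1) ^ (s.filter (fun β => β < α)).card

noncomputable def Dt (k : Type u) [Field k] {ι : Type u} [LinearOrder ι]
    (p : (ι →₀ ℕ) × Finset ι) : M k ι :=
  ∑ α ∈ p.1.support \ p.2, sgn k p.2 α • e k (p.1 - Finsupp.single α 1) (insert α p.2)

noncomputable def D (k ι : Type u) [Field k] [LinearOrder ι] : M k ι →ₗ[k] M k ι :=
  Finsupp.lsum k fun p => LinearMap.toSpanSingleton k _ (Dt k p)

noncomputable def Ht (k : Type u) [Field k] {ι : Type u} [LinearOrder ι]
    (p : (ι →₀ ℕ) × Finset ι) : M k ι :=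
  if h : (p.1.support ∪ p.2).Nonempty then
    if (p.1.support ∪ p.2).min' h ∈ p.2 then
      e k (p.1 + Finsupp.single ((p.1.support ∪ p.2).min' h) 1)
        (p.2.erase ((p.1.support ∪ p.2).min' h))
    else 0
  else 0

noncomputable def H (k ι : Type u) [Field k] [LinearOrder ι] : M k ι →ₗ[k] M k ι :=
  Finsupp.lsum k fun p => LinearMap.toSpanSingleton k _ (Ht k p)

noncomputable def Pr (k ι : Type u) [Field k] [LinearOrder ι] : M k ι →ₗ[k] M k ι :=
  (LinearMap.toSpanSingleton k (M k ι) (e k 0 ∅)).comp (Finsupp.lapply (0, ∅))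

@[simp] lemma D_single (p : (ι →₀ ℕ) × Finset ι) (c : k) :
    D k ι (Finsupp.single p c) = c • Dt k p := by
  simp [D, LinearMap.toSpanSingleton_apply]

@[simp] lemma H_single (p : (ι →₀ ℕ) × Finset ι) (c : k) :
    H k ι (Finsupp.single p c) = c • Ht k p := by
  simp [H, LinearMap.toSpanSingleton_apply]

@[simp] lemma Pr_apply (x : M k ι) : Pr k ι x = x (0, ∅) • e k 0 ∅ := by
  simp [Pr, LinearMap.toSpanSingleton_apply, Finsupp.lapply]

@[simp] lemma D_e (μ : ι →₀ ℕ) (s : Finset ι) : D k ι (e k μ s) = Dt k (μ, s) := by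
  simp [e]

@[simp] lemma H_e (μ : ι →₀ ℕ) (s : Finset ι) : H k ι (e k μ s) = Ht k (μ, s) := by
  simp [e]

-- support/union lemmas
lemma sub_apply_ne (μ : ι →₀ ℕ) {α β : ι} (h : β ≠ α) :
    (μ - Finsupp.single α 1 : ι →₀ ℕ) β = μ β := by
  rw [Finsupp.tsub_apply, Finsupp.single_apply, if_neg h.symm, Nat.sub_zero]

lemma union_stable {μ : ι →₀ ℕ} {s : Finset ι} {α : ι} (hα : α ∈ μ.support) :
    (μ - Finsupp.single α 1).support ∪ insert α s = μ.support ∪ s := by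
  ext x
  rcases eq_or_ne x α with rfl | hx
  · simp [Finset.mem_union, hα]
  · simp only [Finset.mem_union, Finset.mem_insert, hx, false_or, Finsupp.mem_support_iff,
      sub_apply_ne μ hx]

lemma support_add_single (μ : ι →₀ ℕ) (α : ι) :
    (μ + Finsupp.single α 1).support = insert α μ.support := by
  ext x
  rcases eq_or_ne x α with rfl | hx
  · simp [Finsupp.add_apply, Finsupp.single_apply]
  · simp [Finsupp.add_apply, Finsupp.single_apply, hx, hx.symm]


lemma sgn_of_min {s : Finset ι} {α : ι} (h : ∀ β ∈ s, ¬ β < α) : sgn k s α = 1 := by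
  rw [sgn, Finset.filter_false_of_mem h]
  simp

lemma sgn_insert {s : Finset ι} {γ : ι} (hγ : γ ∉ s) (α : ι) :
    sgn k (insert γ s) α = (if γ < α then -1 else 1) * sgn k s α := by
  rw [sgn, sgn, Finset.filter_insert]
  split
  · rw [Finset.card_insert_of_notMem (by simp [hγ]), pow_succ, mul_comm]
  · rw [one_mul]

lemma sgn_erase {s : Finset ι} {γ : ι} (hγ : γ ∈ s) (α : ι) :
    sgn k s α = (if γ < α then -1 else 1) * sgn k (s.erase γ) α := by
  conv_lhs => rw [← Finset.insert_erase hγ]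
  exact sgn_insert (Finset.notMem_erase _ _) α

lemma sdiff_stable {μ : ι →₀ ℕ} {s : Finset ι} {α : ι} (hα : α ∈ μ.support \ s) :
    (μ - Finsupp.single α 1).support \ insert α s = (μ.support \ s).erase α := by
  ext β
  rcases eq_or_ne β α with rfl | hβ
  · simp
  · simp only [Finset.mem_sdiff, Finset.mem_insert, Finset.mem_erase, hβ, false_or,
      Finsupp.mem_support_iff, sub_apply_ne μ hβ, not_or]
    tauto

lemma D_Dt (μ : ι →₀ ℕ) (s : Finset ι) : D k ι (Dt k (μ, s)) = 0 := by
  rw [Dt, map_sum]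
  simp only [map_smul, D_e]
  have step : ∀ α ∈ μ.support \ s, sgn k s α • Dt k (μ - Finsupp.single α 1, insert α s)
      = ∑ β ∈ (μ.support \ s).erase α,
          (sgn k s α * sgn k (insert α s) β) •
            e k (μ - Finsupp.single α 1 - Finsupp.single β 1) (insert β (insert α s)) := by
    intro α hα
    rw [Dt, Finset.smul_sum]
    rw [sdiff_stable hα]
    exact Finset.sum_congr rfl fun β _ => by rw [smul_smul]
  rw [Finset.sum_congr rfl step, Finset.sum_sigma']
  refine Finset.sum_involution (fun (x : (_ : ι) × ι) _ => (⟨x.2, x.1⟩ : (_ : ι) × ι)) ?_ ?_ ?_ ?_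
  · rintro ⟨α, β⟩ hx
    rw [Finset.mem_sigma, Finset.mem_erase] at hx
    have hαA := hx.1
    have hβα := hx.2.1
    have hβA := hx.2.2
    have hαs : α ∉ s := (Finset.mem_sdiff.mp hαA).2
    have hβs : β ∉ s := (Finset.mem_sdiff.mp hβA).2
    have he : e (k := k) (μ - Finsupp.single α 1 - Finsupp.single β 1) (insert β (insert α s))
        = e k (μ - Finsupp.single β 1 - Finsupp.single α 1) (insert α (insert β s)) := by
      rw [tsub_tsub, tsub_tsub, add_comm, Finset.insert_comm]
    have hs : sgn k s α * sgn k (insert α s) β = -(sgn k s β * sgn k (insert β s) α) := by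
      rw [sgn_insert hαs, sgn_insert hβs]
      rcases lt_trichotomy α β with h | h | h
      · rw [if_pos h, if_neg (asymm h)]; ring
      · exact absurd h hβα.symm
      · rw [if_neg (asymm h), if_pos h]; ring
    dsimp only
    rw [he, hs, neg_smul, neg_add_cancel]
  · rintro ⟨α, β⟩ hx _
    rw [Finset.mem_sigma, Finset.mem_erase] at hx
    simp only [ne_eq, Sigma.mk.inj_iff]
    rintro ⟨rfl, -⟩
    exact hx.2.1 rfl
  · rintro ⟨α, β⟩ hx
    rw [Finset.mem_sigma, Finset.mem_erase] at hx ⊢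
    refine ⟨hx.2.2, ?_, hx.1⟩
    exact fun h => hx.2.1 h.symm
  · rintro ⟨α, β⟩ _
    rfl


lemma D_comp_D : (D k ι).comp (D k ι) = 0 := by
  apply Finsupp.lhom_ext
  intro p b
  simp only [LinearMap.comp_apply, D_single, map_smul, LinearMap.zero_apply]
  rw [show p = (p.1, p.2) from rfl, D_Dt, smul_zero]

lemma Ht_congr {p : (ι →₀ ℕ) × Finset ι} {U : Finset ι} (hU : p.1.support ∪ p.2 = U) :
    Ht k p = if h : U.Nonempty then
      (if U.min' h ∈ p.2 then
        e k (p.1 + Finsupp.single (U.min' h) 1) (p.2.erase (U.min' h)) else 0) else 0 := by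
  subst hU; rfl

lemma single_le_of_mem {μ : ι →₀ ℕ} {α : ι} (hα : α ∈ μ.support) : Finsupp.single α 1 ≤ μ := by
  rw [Finsupp.single_le_iff]
  exact Nat.one_le_iff_ne_zero.mpr (Finsupp.mem_support_iff.mp hα)

lemma sub_add_single {μ : ι →₀ ℕ} {α : ι} (γ : ι) (hα : α ∈ μ.support) :
    μ - Finsupp.single α 1 + Finsupp.single γ 1 = μ + Finsupp.single γ 1 - Finsupp.single α 1 :=
  tsub_add_eq_add_tsub (single_le_of_mem hα)

lemma key (μ : ι →₀ ℕ) (s : Finset ι) :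
    D k ι (Ht k (μ, s)) + H k ι (Dt k (μ, s)) + Pr k ι (e k μ s) = e k μ s := by
  by_cases hU : (μ.support ∪ s).Nonempty
  swap
  · rw [Finset.not_nonempty_iff_eq_empty, Finset.union_eq_empty] at hU
    have hμ : μ = 0 := by rw [← Finsupp.support_eq_empty]; exact hU.1
    subst hμ
    rw [hU.2]
    simp [Ht, Dt, e, Finsupp.single_apply]
  set U := μ.support ∪ s with hUdef
  set α₀ := U.min' hU with hα₀def
  have hmin : ∀ x ∈ U, α₀ ≤ x := fun x hx => Finset.min'_le _ _ hx
  have hα₀U : α₀ ∈ U := Finset.min'_mem _ _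
  have hPr : Pr k ι (e k μ s) = 0 := by
    rw [Pr_apply, e, Finsupp.single_apply, if_neg, zero_smul]
    intro h
    rw [Prod.mk.injEq] at h
    rw [hUdef, h.1, h.2] at hU
    simp at hU
  rw [hPr, add_zero]
  by_cases hs : α₀ ∈ s
  · -- minimum is in the exterior part
    have hHt : Ht k (μ, s) = e k (μ + Finsupp.single α₀ 1) (s.erase α₀) := by
      rw [Ht_congr (p := (μ, s)) hUdef.symm, dif_pos hU, if_pos hs]
    have hα₀A : α₀ ∉ μ.support \ s := fun h => (Finset.mem_sdiff.mp h).2 hs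
    have hset : (μ + Finsupp.single α₀ 1).support \ (s.erase α₀)
        = insert α₀ (μ.support \ s) := by
      rw [support_add_single]
      ext x
      rcases eq_or_ne x α₀ with rfl | hx
      · simp [hs]
      · simp only [Finset.mem_sdiff, Finset.mem_insert, hx, false_or, Finset.mem_erase, hx,
          ne_eq, not_false_eq_true, true_and]
    have hD : D k ι (Ht k (μ, s)) = e k μ s +
        ∑ β ∈ μ.support \ s, sgn k (s.erase α₀) β •
          e k (μ + Finsupp.single α₀ 1 - Finsupp.single β 1) (insert β (s.erase α₀)) := by
      rw [hHt, D_e]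
      show Dt k (μ + Finsupp.single α₀ 1, s.erase α₀) = _
      rw [Dt]
      dsimp only
      rw [hset, Finset.sum_insert hα₀A, add_tsub_cancel_right, Finset.insert_erase hs,
        sgn_of_min (fun β hβ => not_lt.mpr (hmin β (Finset.mem_union_right _ (Finset.mem_of_mem_erase hβ)))),
        one_smul]
    have hH : H k ι (Dt k (μ, s)) = -∑ β ∈ μ.support \ s, sgn k (s.erase α₀) β •
          e k (μ + Finsupp.single α₀ 1 - Finsupp.single β 1) (insert β (s.erase α₀)) := by
      rw [Dt]
      dsimp only
      rw [map_sum, ← Finset.sum_neg_distrib]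
      refine Finset.sum_congr rfl fun α hα => ?_
      have hαμ : α ∈ μ.support := (Finset.mem_sdiff.mp hα).1
      have hαs : α ∉ s := (Finset.mem_sdiff.mp hα).2
      have hne : α ≠ α₀ := fun h => hαs (h ▸ hs)
      rw [map_smul, H_e, Ht_congr (p := (μ - Finsupp.single α 1, insert α s)) (union_stable hαμ),
        dif_pos hU, if_pos (Finset.mem_insert_of_mem hs)]
      dsimp only
      rw [sub_add_single α₀ hαμ, Finset.erase_insert_of_ne hne,
        sgn_erase (k := k) hs α, if_pos (lt_of_le_of_ne (hmin α (Finset.mem_union_left _ hαμ)) hne.symm),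
        neg_one_mul, neg_smul]
    rw [hD, hH]
    abel
  · -- minimum is in the symmetric part
    have hα₀μ : α₀ ∈ μ.support := by
      rcases Finset.mem_union.mp hα₀U with h | h
      · exact h
      · exact absurd h hs
    have hHt : Ht k (μ, s) = 0 := by
      rw [Ht_congr (p := (μ, s)) hUdef.symm, dif_pos hU, if_neg hs]
    rw [hHt, map_zero, zero_add]
    rw [Dt]
    dsimp only
    rw [map_sum]
    rw [Finset.sum_eq_single_of_mem α₀ (Finset.mem_sdiff.mpr ⟨hα₀μ, hs⟩)]
    · rw [map_smul, H_e, Ht_congr (p := (μ - Finsupp.single α₀ 1, insert α₀ s)) (union_stable hα₀μ),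
        dif_pos hU, if_pos (Finset.mem_insert_self _ _)]
      dsimp only
      rw [tsub_add_cancel_of_le (single_le_of_mem hα₀μ), Finset.erase_insert hs,
        sgn_of_min (fun β hβ => not_lt.mpr (hmin β (Finset.mem_union_right _ hβ))), one_smul]
    · intro α hα hne
      have hαμ : α ∈ μ.support := (Finset.mem_sdiff.mp hα).1
      rw [map_smul, H_e, Ht_congr (p := (μ - Finsupp.single α 1, insert α s)) (union_stable hαμ),
        dif_pos hU, if_neg, smul_zero]
      dsimp only
      rw [Finset.mem_insert]
      rintro (h | h)
      · exact hne h.symm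
      · exact hs h

lemma homotopy : (D k ι).comp (H k ι) + (H k ι).comp (D k ι) + Pr k ι
    = (LinearMap.id : M k ι →ₗ[k] M k ι) := by
  apply Finsupp.lhom_ext
  intro p b
  have hp : (Finsupp.single p b : M k ι) = b • e k p.1 p.2 := by
    rw [e, Finsupp.smul_single, smul_eq_mul, mul_one]
  simp only [LinearMap.add_apply, LinearMap.comp_apply, LinearMap.id_apply, hp, map_smul, H_e, D_e]
  rw [key]


noncomputable def J (n : ℕ) : SymKos k ι n →ₗ[k] M k ι :=
  Finsupp.lmapDomain k k (fun p => (p.1, p.2.1))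

lemma g_inj (n : ℕ) : Function.Injective
    (fun p : (ι →₀ ℕ) × {s : Finset ι // s.card = n} => ((p.1, p.2.1) : (ι →₀ ℕ) × Finset ι)) := by
  rintro ⟨μ, s⟩ ⟨ν, t⟩ h
  rw [Prod.mk.injEq] at h
  exact Prod.ext h.1 (Subtype.ext h.2)

lemma J_inj (n : ℕ) : Function.Injective (J (k := k) (ι := ι) n) :=
  Finsupp.mapDomain_injective (g_inj n)

lemma J_single (n : ℕ) (p : (ι →₀ ℕ) × {s : Finset ι // s.card = n}) (c : k) :
    J n (Finsupp.single p c) = Finsupp.single ((p.1, p.2.1) : (ι →₀ ℕ) × Finset ι) c := by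
  show Finsupp.mapDomain _ _ = _
  rw [Finsupp.mapDomain_single]

lemma J_comm (n : ℕ) : (J (k := k) (ι := ι) (n + 1)).comp (symKosDiff k ι n)
    = (D k ι).comp (J n) := by
  apply Finsupp.lhom_ext
  rintro ⟨μ, s, hs⟩ b
  show J (n + 1) (symKosDiff k ι n (Finsupp.single (μ, ⟨s, hs⟩) b))
    = D k ι (J n (Finsupp.single (μ, ⟨s, hs⟩) b))
  simp only [LinearMap.comp_apply, symKosDiff, Finsupp.lsum_single,
    LinearMap.toSpanSingleton_apply, map_smul, map_sum, J_single, D_single]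
  erw [Finsupp.lsum_single, LinearMap.toSpanSingleton_apply, map_smul, map_sum]
  simp only [map_smul, J_single]
  congr 1
  show _ = Dt k (μ, s)
  rw [Dt]
  dsimp only
  rw [← Finset.sum_attach (μ.support \ s)
    (fun α => sgn k s α • e k (μ - Finsupp.single α 1) (insert α s))]
  refine Finset.sum_congr rfl fun x _ => ?_
  erw [map_smul, J_single]
  rfl

lemma Ht_mem_range (n : ℕ) (p : (ι →₀ ℕ) × {s : Finset ι // s.card = n + 1}) :
    Ht k ((p.1, p.2.1) : (ι →₀ ℕ) × Finset ι) ∈ LinearMap.range (J (k := k) (ι := ι) n) := by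
  rw [Ht]
  dsimp only
  split
  · next h =>
    split
    · next hmem =>
      refine ⟨Finsupp.single (p.1 + Finsupp.single ((p.1.support ∪ p.2.1).min' h) 1,
        ⟨p.2.1.erase ((p.1.support ∪ p.2.1).min' h), ?_⟩) 1, ?_⟩
      · rw [Finset.card_erase_of_mem hmem, p.2.2]; omega
      · rw [J_single]; rfl
    · exact zero_mem _
  · exact zero_mem _

lemma H_J_mem (n : ℕ) (x : SymKos k ι (n + 1)) :
    H k ι (J (n + 1) x) ∈ LinearMap.range (J (k := k) (ι := ι) n) := by
  induction x using Finsupp.induction_linear with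
  | zero => erw [map_zero]; exact zero_mem _
  | add f g hf hg => erw [map_add, map_add]; exact add_mem hf hg
  | single p c =>
    rw [J_single, H_single]
    exact Submodule.smul_mem _ _ (Ht_mem_range n p)

lemma Pr_J (n : ℕ) (x : SymKos k ι (n + 1)) : Pr k ι (J (n + 1) x) = 0 := by
  rw [Pr_apply]
  have : (J (n + 1) x) ((0 : ι →₀ ℕ), (∅ : Finset ι)) = 0 := by
    show Finsupp.mapDomain _ x _ = 0
    apply Finsupp.mapDomain_notin_range
    rintro ⟨⟨μ, s⟩, hp⟩
    have := congrArg (fun q => q.2.card) hp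
    simp only at this
    rw [s.2] at this
    simp at this
  rw [this, zero_smul]

lemma H_J_zero (x : SymKos k ι 0) : H k ι (J 0 x) = 0 := by
  induction x using Finsupp.induction_linear with
  | zero => erw [map_zero]
  | add f g hf hg => erw [map_add, map_add, hf, hg, add_zero]
  | single p c =>
    rw [J_single, H_single]
    have hs : p.2.1 = (∅ : Finset ι) := Finset.card_eq_zero.mp p.2.2
    have : Ht k ((p.1, p.2.1) : (ι →₀ ℕ) × Finset ι) = 0 := by
      rw [Ht]
      dsimp only
      rw [hs]
      split
      · rw [if_neg (Finset.notMem_empty _)]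
      · rfl
    rw [this, smul_zero]

lemma homotopy_apply (x : M k ι) :
    D k ι (H k ι x) + H k ι (D k ι x) + Pr k ι x = x := by
  have := LinearMap.ext_iff.mp (homotopy (k := k) (ι := ι)) x
  simpa using this

lemma J_unit (c : k) : J 0 (symKosUnit k ι c) = c • e k 0 ∅ := by
  show J 0 (c • (Finsupp.single ((0 : ι →₀ ℕ), (⟨∅, rfl⟩ : {s : Finset ι // s.card = 0})) (1 : k) :
    SymKos k ι 0)) = _
  erw [map_smul, J_single]
  rfl

lemma Dt_zero_empty : Dt k ((0 : ι →₀ ℕ), (∅ : Finset ι)) = 0 := by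
  rw [Dt]
  dsimp only
  rw [Finsupp.support_zero, Finset.empty_sdiff, Finset.sum_empty]


lemma unit_eq (c : k) : symKosUnit k ι c
    = (Finsupp.single ((0 : ι →₀ ℕ), ⟨(∅ : Finset ι), rfl⟩) c :
        ((ι →₀ ℕ) × {s : Finset ι // s.card = 0}) →₀ k) := by
  show c • (Finsupp.single ((0 : ι →₀ ℕ), (⟨∅, rfl⟩ : {s : Finset ι // s.card = 0})) (1 : k) :
    SymKos k ι 0) = _
  erw [Finsupp.smul_single]
  rw [smul_eq_mul, mul_one]

end SKP

open SKP

/-- For any `k`-vector space `W` (with a basis indexed by `ι`), the dual Koszul complex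
`0 → k → Sym(W) → Sym(W) ⊗ W → Sym(W) ⊗ Λ²(W) → ⋯` of the symmetric coalgebra `Sym(W)`,
with differential induced by the comultiplication `Sym(W) → Sym(W) ⊗ W` followed by the
exterior multiplication `W ⊗ Λⁿ(W) → Λⁿ⁺¹(W)`, is exact. -/
theorem symmetric_coalgebra_dual_koszul_exact
    (k : Type u) [Field k] (W : Type u) [AddCommGroup W] [Module k W]
    (ι : Type u) [LinearOrder ι] (b : Module.Basis ι k W) :
    Function.Injective (symKosUnit k ι) ∧
    Function.Exact (symKosUnit k ι) (symKosDiff k ι 0) ∧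
    (∀ n : ℕ, Function.Exact (symKosDiff k ι n) (symKosDiff k ι (n + 1))) := by
  refine ⟨?_, ?_, ?_⟩
  · intro a b h
    rw [unit_eq, unit_eq] at h
    exact Finsupp.single_injective _ h
  · intro y
    constructor
    · intro hy
      have h1 := LinearMap.congr_fun (J_comm (k := k) (ι := ι) 0) y
      simp only [LinearMap.comp_apply] at h1
      rw [hy, map_zero] at h1
      have hid := homotopy_apply (J 0 y)
      rw [H_J_zero, map_zero, zero_add, ← h1, map_zero, zero_add] at hid
      set c := (J 0 y) ((0 : ι →₀ ℕ), (∅ : Finset ι)) with hcdef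
      refine ⟨c, ?_⟩
      apply J_inj 0
      rw [J_unit, ← hid, Pr_apply]
    · rintro ⟨c, rfl⟩
      apply J_inj 1
      have h1 := LinearMap.congr_fun (J_comm (k := k) (ι := ι) 0) (symKosUnit k ι c)
      simp only [LinearMap.comp_apply] at h1
      rw [h1, J_unit, map_smul, D_e, Dt_zero_empty, smul_zero, map_zero]
  · intro n y
    constructor
    · intro hy
      have h1 := LinearMap.congr_fun (J_comm (k := k) (ι := ι) (n + 1)) y
      simp only [LinearMap.comp_apply] at h1
      rw [hy, map_zero] at h1
      have hid := homotopy_apply (J (n + 1) y)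
      rw [← h1, map_zero, add_zero, Pr_J, add_zero] at hid
      obtain ⟨z, hz⟩ := H_J_mem n y
      refine ⟨z, ?_⟩
      apply J_inj (n + 1)
      have h2 := LinearMap.congr_fun (J_comm (k := k) (ι := ι) n) z
      simp only [LinearMap.comp_apply] at h2
      rw [h2, hz, hid]
    · rintro ⟨z, rfl⟩
      apply J_inj (n + 1 + 1)
      have h1 := LinearMap.congr_fun (J_comm (k := k) (ι := ι) (n + 1)) (symKosDiff k ι n z)
      simp only [LinearMap.comp_apply] at h1
      have h2 := LinearMap.congr_fun (J_comm (k := k) (ι := ι) n) z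
      simp only [LinearMap.comp_apply] at h2
      rw [h1, h2, ← LinearMap.comp_apply, D_comp_D, LinearMap.zero_apply, map_zero]
end

section
/- Let k be a field and S_uni the k-algebra generated by elements x₀, x₁, x₂, … subject only to the relations xₙ xₙ₊₁ = 0 for all n ≥ 0. Then: (i) if s ∈ S_uni satisfies s·x₀ = 0, then s = 0; and (ii) for n ≥ 0, if s ∈ S_uni satisfies s·xₙ₊₁ = 0, then s = t·xₙ for some t ∈ S_uni. -/
universe u

/-- The defining relations of the universal algebra `S_uni`: `xₙ xₙ₊₁ = 0` for all `n ≥ 0`. -/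
def SuniRel (k : Type u) [Field k] : FreeAlgebra k ℕ → FreeAlgebra k ℕ → Prop :=
  fun a b => ∃ n : ℕ, a = FreeAlgebra.ι k n * FreeAlgebra.ι k (n + 1) ∧ b = 0

/-- The `k`-algebra `S_uni` generated by elements `x₀, x₁, x₂, …` subject only to the
relations `xₙ xₙ₊₁ = 0` for all `n ≥ 0`. -/
abbrev Suni (k : Type u) [Field k] : Type u := RingQuot (SuniRel k)

/-- The generator `xₙ` of `S_uni`. -/
noncomputable def xgen (k : Type u) [Field k] (n : ℕ) : Suni k :=
  RingQuot.mkAlgHom k (SuniRel k) (FreeAlgebra.ι k n)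

namespace SuniAux

/-- Admissible words: no factor `xₙ xₙ₊₁`. -/
def Adm (l : List ℕ) : Prop := l.Chain' (fun a b => b ≠ a + 1)

lemma adm_nil : Adm [] := List.isChain_nil

lemma adm_single (n : ℕ) : Adm [n] := List.isChain_singleton n

instance : DecidablePred Adm := fun l =>
  inferInstanceAs (Decidable (l.IsChain (fun a b => b ≠ a + 1)))

lemma adm_of_cons {a : ℕ} {l : List ℕ} (h : Adm (a :: l)) : Adm l := List.IsChain.tail h

lemma adm_append_single {l : List ℕ} (hl : Adm l) (n : ℕ) :
    Adm (l ++ [n]) ↔ ∀ x ∈ l.getLast?, n ≠ x + 1 := by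
  rw [Adm, List.Chain', List.isChain_append]
  constructor
  · rintro ⟨-, -, h⟩ x hx
    exact h x hx n rfl
  · refine fun h => ⟨hl, adm_single n, fun x hx y hy => ?_⟩
    simp only [List.head?_cons, Option.mem_def, Option.some.injEq] at hy
    subst hy
    exact h x hx

lemma adm_append_single_of_ne {l : List ℕ} (hl : Adm l) {n : ℕ}
    (h : l.getLast? ≠ some n) : Adm (l ++ [n + 1]) := by
  rw [adm_append_single hl]
  intro x hx hc
  apply h
  obtain rfl : x = n := by omega
  exact hx

/-- Admissible words. -/
abbrev W := { l : List ℕ // Adm l }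

variable (k : Type u) [Field k]

/-- Free `k`-module on admissible words. -/
abbrev V := W →₀ k

noncomputable def δ (w : W) : V k := Finsupp.single w 1

/-- Left-multiplication-by-`xₙ` operator on `V`. -/
noncomputable def estep (n : ℕ) : V k →ₗ[k] V k :=
  Finsupp.lift (V k) k W (fun w => if h : Adm (n :: w.1) then δ k ⟨n :: w.1, h⟩ else 0)

lemma estep_single (n : ℕ) (w : W) (b : k) :
    estep k n (Finsupp.single w b) =
      b • (if h : Adm (n :: w.1) then δ k ⟨n :: w.1, h⟩ else 0) := by
  simp [estep]

lemma estep_δ (n : ℕ) (w : W) :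
    estep k n (δ k w) = if h : Adm (n :: w.1) then δ k ⟨n :: w.1, h⟩ else 0 := by
  rw [δ, estep_single, one_smul]

lemma estep_rel (n : ℕ) : (estep k n) * (estep k (n + 1)) = 0 := by
  apply Finsupp.lhom_ext
  intro w b
  rw [Module.End.mul_apply, estep_single, map_smul]
  by_cases h : Adm ((n + 1) :: w.1)
  · rw [dif_pos h, estep_δ, dif_neg, smul_zero, LinearMap.zero_apply]
    intro hc
    rw [Adm, List.Chain', List.isChain_cons_cons] at hc
    exact hc.1 rfl
  · rw [dif_neg h]
    simp

/-- The representation of `Suni` on `V`. -/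
noncomputable def rho : Suni k →ₐ[k] Module.End k (V k) :=
  RingQuot.liftAlgHom k ⟨FreeAlgebra.lift k (estep k), by
    rintro x y ⟨n, rfl, rfl⟩
    rw [map_mul, map_zero]
    simp only [FreeAlgebra.lift_ι_apply]
    exact estep_rel k n⟩

lemma rho_xgen (n : ℕ) : rho k (xgen k n) = estep k n := by
  rw [xgen, rho, RingQuot.liftAlgHom_mkAlgHom_apply, FreeAlgebra.lift_ι_apply]

/-- The linearization of "word ↦ product of generators". -/
noncomputable def sig : V k →ₗ[k] Suni k :=
  Finsupp.lift (Suni k) k W (fun w => (w.1.map (xgen k)).prod)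

lemma sig_single (w : W) (b : k) :
    sig k (Finsupp.single w b) = b • (w.1.map (xgen k)).prod := by
  simp [sig]

lemma xgen_rel (n : ℕ) : xgen k n * xgen k (n + 1) = 0 := by
  have h : SuniRel k (FreeAlgebra.ι k n * FreeAlgebra.ι k (n + 1)) 0 := ⟨n, rfl, rfl⟩
  have := RingQuot.mkAlgHom_rel k h
  simpa [xgen, map_mul] using this

lemma prod_eq_zero_of_not_adm : ∀ {l : List ℕ}, ¬ Adm l → (l.map (xgen k)).prod = 0
  | [], h => absurd adm_nil h
  | [a], h => absurd (adm_single a) h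
  | a :: b :: t, h => by
    rw [Adm, List.Chain', List.isChain_cons_cons] at h
    push_neg at h
    by_cases hb : b = a + 1
    · subst hb
      rw [List.map_cons, List.map_cons, List.prod_cons, List.prod_cons, ← mul_assoc,
        xgen_rel, zero_mul]
    · have ht : ¬ Adm (b :: t) := h hb
      rw [List.map_cons, List.prod_cons, prod_eq_zero_of_not_adm ht, mul_zero]

lemma rho_prod (l : List ℕ) (w : W) :
    rho k ((l.map (xgen k)).prod) (δ k w) =
      if h : Adm (l ++ w.1) then δ k ⟨l ++ w.1, h⟩ else 0 := by
  induction l with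
  | nil => simp [w.2]
  | cons a t ih =>
    rw [List.map_cons, List.prod_cons, map_mul, Module.End.mul_apply, ih]
    by_cases h : Adm (t ++ w.1)
    · rw [dif_pos h, rho_xgen, estep_δ]
      rfl
    · rw [dif_neg h, map_zero, dif_neg]
      intro hc
      exact h (adm_of_cons (show Adm (a :: (t ++ w.1)) from hc))

noncomputable def theta : Suni k →ₗ[k] V k where
  toFun s := rho k s (δ k ⟨[], adm_nil⟩)
  map_add' x y := by simp [map_add]
  map_smul' c x := by simp [map_smul]

lemma theta_apply (s : Suni k) : theta k s = rho k s (δ k ⟨[], adm_nil⟩) := rfl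

lemma theta_sig : (theta k).comp (sig k) = LinearMap.id := by
  apply Finsupp.lhom_ext
  intro w b
  rw [LinearMap.comp_apply, sig_single, map_smul, theta_apply, rho_prod]
  have h : Adm (w.1 ++ []) := by simpa using w.2
  rw [dif_pos h]
  simp only [LinearMap.id_apply]
  have : (⟨w.1 ++ [], h⟩ : W) = w := Subtype.ext (List.append_nil _)
  rw [this, δ, Finsupp.smul_single, smul_eq_mul, mul_one]

lemma theta_sig_apply (v : V k) : theta k (sig k v) = v :=
  LinearMap.congr_fun (theta_sig k) v

lemma mul_mem_range (a b : V k) :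
    sig k a * sig k b ∈ LinearMap.range (sig k) := by
  induction a using Finsupp.induction_linear with
  | zero => simp
  | add f g hf hg => rw [map_add, add_mul]; exact Submodule.add_mem _ hf hg
  | single w c =>
    induction b using Finsupp.induction_linear with
    | zero => simp
    | add f g hf hg => rw [map_add, mul_add]; exact Submodule.add_mem _ hf hg
    | single v d =>
      rw [sig_single, sig_single, smul_mul_smul_comm]
      apply Submodule.smul_mem
      have hprod : (w.1.map (xgen k)).prod * (v.1.map (xgen k)).prod
          = ((w.1 ++ v.1).map (xgen k)).prod := by
        rw [List.map_append, List.prod_append]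
      rw [hprod]
      by_cases h : Adm (w.1 ++ v.1)
      · exact ⟨Finsupp.single ⟨w.1 ++ v.1, h⟩ 1, by rw [sig_single, one_smul]⟩
      · rw [prod_eq_zero_of_not_adm k h]; simp

lemma sig_surjective : Function.Surjective (sig k) := by
  intro s
  obtain ⟨x, rfl⟩ := RingQuot.mkAlgHom_surjective k (SuniRel k) s
  induction x using FreeAlgebra.induction with
  | grade0 r =>
    refine ⟨Finsupp.single ⟨[], adm_nil⟩ r, ?_⟩
    rw [sig_single]
    simp [Algebra.algebraMap_eq_smul_one]
  | grade1 i =>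
    refine ⟨Finsupp.single ⟨[i], adm_single i⟩ 1, ?_⟩
    rw [sig_single, one_smul]
    simp [xgen]
  | mul x y hx hy =>
    obtain ⟨a, ha⟩ := hx
    obtain ⟨b, hb⟩ := hy
    rw [map_mul, ← ha, ← hb]
    exact mul_mem_range k a b
  | add x y hx hy =>
    obtain ⟨a, ha⟩ := hx
    obtain ⟨b, hb⟩ := hy
    exact ⟨a + b, by rw [map_add, ha, hb, map_add]⟩

lemma sig_theta_apply (s : Suni k) : sig k (theta k s) = s := by
  obtain ⟨v, rfl⟩ := sig_surjective k s
  rw [theta_sig_apply]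

lemma rho_sig_word (m : ℕ) (v : V k) :
    rho k (sig k v) (δ k ⟨[m], adm_single m⟩) =
      v.sum (fun u c =>
        c • (if h : Adm (u.1 ++ [m]) then δ k ⟨u.1 ++ [m], h⟩ else 0)) := by
  have key : (LinearMap.applyₗ (δ k ⟨[m], adm_single m⟩)).comp
        ((rho k).toLinearMap.comp (sig k))
      = Finsupp.lift (V k) k W
          (fun u => if h : Adm (u.1 ++ [m]) then δ k ⟨u.1 ++ [m], h⟩ else 0) := by
    apply Finsupp.lhom_ext
    intro u b
    simp only [LinearMap.comp_apply, AlgHom.toLinearMap_apply, Finsupp.lift_apply,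
      Finsupp.sum_single_index, zero_smul]
    rw [sig_single, map_smul]
    have : LinearMap.applyₗ (δ k ⟨[m], adm_single m⟩)
          (b • rho k ((u.1.map (xgen k)).prod))
        = b • (rho k ((u.1.map (xgen k)).prod) (δ k ⟨[m], adm_single m⟩)) := by
      simp
    rw [this, rho_prod]
  have h2 := LinearMap.congr_fun key v
  simp only [LinearMap.comp_apply, AlgHom.toLinearMap_apply, Finsupp.lift_apply] at h2
  simpa using h2

lemma coeff_eq_zero (m : ℕ) (v : V k)
    (h : rho k (sig k v) (δ k ⟨[m], adm_single m⟩) = 0)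
    (u : W) (hu : Adm (u.1 ++ [m])) : v u = 0 := by
  rw [rho_sig_word] at h
  have h2 := DFunLike.congr_fun h (⟨u.1 ++ [m], hu⟩ : W)
  rw [Finsupp.sum_apply, Finsupp.coe_zero, Pi.zero_apply] at h2
  rw [Finsupp.sum_eq_single u ?h0 ?h1] at h2
  case h0 =>
    intro u' _ hne
    by_cases h' : Adm (u'.1 ++ [m])
    · rw [dif_pos h', δ, Finsupp.smul_single, Finsupp.single_eq_of_ne]
      intro hc
      apply hne
      exact Subtype.ext (List.append_left_injective [m] (congrArg Subtype.val hc.symm))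
    · rw [dif_neg h', smul_zero, Finsupp.coe_zero, Pi.zero_apply]
  case h1 => simp
  rw [dif_pos hu, δ, Finsupp.smul_single, Finsupp.single_eq_same, smul_eq_mul, mul_one] at h2
  exact h2

lemma exists_factor (n : ℕ) (v : V k) (hv : ∀ w ∈ v.support, w.1.getLast? = some n) :
    ∃ t : Suni k, sig k v = t * xgen k n := by
  classical
  revert hv
  induction v using Finsupp.induction with
  | zero => exact fun _ => ⟨0, by simp⟩
  | single_add w b f hw hb ih =>
    intro hv
    have hwmem : w ∈ (Finsupp.single w b + f).support := by
      rw [Finsupp.mem_support_iff, Finsupp.add_apply, Finsupp.single_eq_same,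
        Finsupp.notMem_support_iff.mp hw, add_zero]
      exact hb
    have hwlast := hv w hwmem
    have hf : ∀ u ∈ f.support, u.1.getLast? = some n := by
      intro u hu
      apply hv
      rw [Finsupp.mem_support_iff, Finsupp.add_apply]
      have hne : w ≠ u := fun e => hw (e ▸ hu)
      rw [Finsupp.single_eq_of_ne hne.symm, zero_add]
      exact Finsupp.mem_support_iff.mp hu
    obtain ⟨t, ht⟩ := ih hf
    have hne : w.1 ≠ [] := by
      intro e
      rw [e] at hwlast
      simp at hwlast
    have hlast : w.1.getLast hne = n := by
      have := List.getLast?_eq_getLast (l := w.1) hne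
      rw [this] at hwlast
      exact Option.some.injEq _ _ ▸ (by simpa using hwlast)
    have hdecomp : w.1 = w.1.dropLast ++ [n] := by
      conv_lhs => rw [← List.dropLast_append_getLast hne]
      rw [hlast]
    have hsingle : sig k (Finsupp.single w b)
        = (b • ((w.1.dropLast.map (xgen k)).prod)) * xgen k n := by
      rw [sig_single]
      conv_lhs => rw [hdecomp]
      rw [List.map_append, List.prod_append, List.map_singleton, List.prod_singleton,
        smul_mul_assoc]
    refine ⟨b • ((w.1.dropLast.map (xgen k)).prod) + t, ?_⟩
    rw [map_add, hsingle, ht, add_mul]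

end SuniAux

open SuniAux

/-- In `S_uni`: (i) any element `s` with `s·x₀ = 0` vanishes; (ii) for `n ≥ 0`, any element
`s` with `s·xₙ₊₁ = 0` has the form `s = t·xₙ` for some `t ∈ S_uni`. -/
theorem suni_annihilators (k : Type u) [Field k] :
    (∀ s : Suni k, s * xgen k 0 = 0 → s = 0) ∧
    (∀ n : ℕ, ∀ s : Suni k, s * xgen k (n + 1) = 0 → ∃ t : Suni k, s = t * xgen k n) := by
  constructor
  · intro s hs
    obtain ⟨v, rfl⟩ := sig_surjective k s
    have h0 : rho k (sig k v) (δ k ⟨[0], adm_single 0⟩) = 0 := by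
      have h1 : rho k (sig k v * xgen k 0) (δ k ⟨[], adm_nil⟩) = 0 := by
        rw [hs, map_zero, LinearMap.zero_apply]
      rw [map_mul, Module.End.mul_apply, rho_xgen, estep_δ, dif_pos (adm_single 0)] at h1
      exact h1
    have hv : v = 0 := by
      ext u
      refine coeff_eq_zero k 0 v h0 u ?_
      rw [adm_append_single u.2]
      intro x _
      omega
    rw [hv, map_zero]
  · intro n s hs
    obtain ⟨v, rfl⟩ := sig_surjective k s
    have h0 : rho k (sig k v) (δ k ⟨[n + 1], adm_single (n + 1)⟩) = 0 := by
      have h1 : rho k (sig k v * xgen k (n + 1)) (δ k ⟨[], adm_nil⟩) = 0 := by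
        rw [hs, map_zero, LinearMap.zero_apply]
      rw [map_mul, Module.End.mul_apply, rho_xgen, estep_δ,
        dif_pos (adm_single (n + 1))] at h1
      exact h1
    have hsupp : ∀ u ∈ v.support, u.1.getLast? = some n := by
      intro u hu
      by_contra hne
      exact (Finsupp.mem_support_iff.mp hu)
        (coeff_eq_zero k (n + 1) v h0 u (adm_append_single_of_ne u.2 hne))
    exact exists_factor k n v hsupp
end

section
/- Let k be a field and S = S_uni the k-algebra generated by x₀, x₁, x₂, … with relations xₙ xₙ₊₁ = 0. The acyclic complex of free left S-modules 0 → S →(·x₀) S →(·x₁) S → ⋯ is not contractible: applying the functor k ⊗_S − (where k is the right S-module on which all xₙ act by zero) yields the complex 0 → k →0 k →0 k → ⋯ with zero differentials, which is not acyclic. -/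
universe u

lemma xgen_mul_succ (k : Type u) [Field k] (n : ℕ) :
    xgen k n * xgen k (n + 1) = 0 := by
  have hr : SuniRel k (FreeAlgebra.ι k n * FreeAlgebra.ι k (n + 1)) 0 := ⟨n, rfl, rfl⟩
  have h := RingQuot.mkAlgHom_rel k hr
  simpa [map_mul, map_zero, xgen] using h

/-- Right multiplication by `a` as a map of left modules. -/
def mulRightLin (S : Type u) [Ring S] (a : S) : S →ₗ[S] S where
  toFun s := s * a
  map_add' x y := add_mul x y a
  map_smul' r s := mul_assoc r s a

open CategoryTheory

/-- The bounded below complex `0 → S → S → S → ⋯` of free left `S_uni`-modules with one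
generator, with differentials given by right multiplication by `x₀, x₁, x₂, …`. -/
noncomputable def suniComplex (k : Type u) [Field k] :
    CochainComplex (ModuleCat.{u} (Suni k)) ℕ :=
  CochainComplex.of (fun _ => ModuleCat.of (Suni k) (Suni k))
    (fun n => ModuleCat.ofHom (mulRightLin (Suni k) (xgen k n)))
    (fun n => by
      have h : (mulRightLin (Suni k) (xgen k (n + 1))).comp
          (mulRightLin (Suni k) (xgen k n)) = 0 := by
        apply LinearMap.ext
        intro s
        show (s * xgen k n) * xgen k (n + 1) = 0
        rw [mul_assoc, xgen_mul_succ, mul_zero]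
      first
        | exact ModuleCat.hom_ext h
        | exact ModuleCat.hom_ext (by rw [ModuleCat.hom_comp, ModuleCat.hom_ofHom, ModuleCat.hom_ofHom, ModuleCat.hom_zero]; exact h))

/-- The algebra map `S_uni → k` sending every generator to `0`. -/
noncomputable def epsHom (k : Type u) [Field k] : Suni k →ₐ[k] k :=
  RingQuot.liftAlgHom k ⟨FreeAlgebra.lift k (fun _ => (0:k)), by
    rintro a b ⟨n, rfl, rfl⟩; simp⟩

lemma epsHom_xgen (k : Type u) [Field k] (n : ℕ) : epsHom k (xgen k n) = 0 := by
  simp [epsHom, xgen, RingQuot.liftAlgHom_mkAlgHom_apply]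

/-- The acyclic complex `0 → S →(·x₀) S →(·x₁) S → ⋯` of free left `S_uni`-modules is *not*
contractible. -/
theorem suni_complex_not_contractible (k : Type u) [Field k] :
    ¬ Nonempty (Homotopy (𝟙 (suniComplex k)) 0) := by
  rintro ⟨h⟩
  have hc := h.comm 0
  have hprev : prevD 0 h.hom = 0 := by
    unfold prevD
    rw [AddMonoidHom.mk'_apply]
    rw [(suniComplex k).shape _ 0 (by simp [ComplexShape.up_Rel]), Limits.comp_zero]
  have hd : dNext 0 h.hom = (suniComplex k).d 0 1 ≫ h.hom 1 0 :=
    dNext_eq h.hom (by simp [ComplexShape.up_Rel])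
  rw [hprev, hd] at hc
  have key := congrArg (fun (f : (suniComplex k).X 0 ⟶ (suniComplex k).X 0) => f (1 : Suni k)) hc
  simp only [HomologicalComplex.id_f, HomologicalComplex.zero_f_apply] at key
  have hd01 : (suniComplex k).d 0 1 = ModuleCat.ofHom (mulRightLin (Suni k) (xgen k 0)) :=
    CochainComplex.of_d _ (fun n => ModuleCat.ofHom (mulRightLin (Suni k) (xgen k n))) 0
  rw [hd01] at key
  have e1 : (ModuleCat.ofHom (mulRightLin (Suni k) (xgen k 0))) (1 : Suni k)
      = xgen k 0 • (1 : Suni k) := by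
    show (1 : Suni k) * xgen k 0 = xgen k 0 * 1
    rw [one_mul, mul_one]
  simp only [add_zero] at key
  change (1 : Suni k) = h.hom 1 0 ((ModuleCat.ofHom (mulRightLin (Suni k) (xgen k 0))) (1 : Suni k)) at key
  have key2 : (1 : Suni k) = xgen k 0 • (h.hom 1 0 (1 : Suni k)) := by
    calc (1 : Suni k) = (show Suni k from h.hom 1 0 ((ModuleCat.ofHom (mulRightLin (Suni k) (xgen k 0)))
          (1 : Suni k))) := key
      _ = (show Suni k from h.hom 1 0 (xgen k 0 • (1 : Suni k))) := by rw [e1]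
      _ = (show Suni k from xgen k 0 • (h.hom 1 0 (1 : Suni k))) := map_smul _ _ _
  have hfin := congrArg (epsHom k) key2
  change epsHom k 1 = epsHom k (xgen k 0 * (show Suni k from h.hom 1 0 (1 : Suni k))) at hfin
  rw [map_one, map_mul, epsHom_xgen, zero_mul] at hfin
  exact one_ne_zero hfin
end

section
/- Let R be a coherent commutative ring, Q a finitely generated projective R-module, and P a flat R-module. Then the R-module Hom_R(Q, P) is flat. More generally, over a coherent ring, any product of flat modules is flat, and hence Hom_R(Q, P) is flat for every projective R-module Q and flat R-module P. -/
universe u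

set_option synthInstance.maxHeartbeats 400000
set_option maxHeartbeats 1000000

open TensorProduct LinearMap Function Finsupp

section aux

variable {R : Type u} [CommRing R] {ι : Type u} {M : ι → Type u}
  [∀ i, AddCommGroup (M i)] [∀ i, Module R (M i)]

/-- Naturality of `piRightHom`. -/
lemma chase_nat {N N' : Type u} [AddCommGroup N] [Module R N]
    [AddCommGroup N'] [Module R N'] (f : N →ₗ[R] N') (x : N ⊗[R] (∀ i, M i)) (i : ι) :
    TensorProduct.piRightHom R R N' M (f.rTensor _ x) i
      = f.rTensor (M i) (TensorProduct.piRightHom R R N M x i) := by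
  induction x using TensorProduct.induction_on with
  | zero => simp
  | tmul n m => simp
  | add a b ha hb => simp only [map_add, Pi.add_apply, ha, hb]

/-- The scalar tensor equivalence `(κ → R) ⊗ X ≃ (κ → X)`. -/
noncomputable def chaseEqv (κ : Type u) [Fintype κ] [DecidableEq κ] (X : Type u)
    [AddCommGroup X] [Module R X] : ((κ → R) ⊗[R] X) ≃ₗ[R] (κ → X) :=
  (TensorProduct.comm R _ _).trans (TensorProduct.piScalarRight R R X κ)

lemma chaseEqv_tmul {κ : Type u} [Fintype κ] [DecidableEq κ] {X : Type u}
    [AddCommGroup X] [Module R X] (f : κ → R) (x : X) :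
    chaseEqv κ X (f ⊗ₜ[R] x) = fun k => f k • x := by
  simp [chaseEqv]

lemma chaseEqv_component {κ : Type u} [Fintype κ] [DecidableEq κ]
    (x : (κ → R) ⊗[R] (∀ i, M i)) (k : κ) (i : ι) :
    chaseEqv κ (M i) (TensorProduct.piRightHom R R (κ → R) M x i) k
      = chaseEqv κ (∀ i, M i) x k i := by
  induction x using TensorProduct.induction_on with
  | zero => simp only [_root_.map_zero, Pi.zero_apply]
  | tmul f m => simp only [TensorProduct.piRightHom_tmul, chaseEqv_tmul, Pi.smul_apply]
  | add a b ha hb => simp only [map_add, Pi.add_apply, ha, hb]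

lemma chase_sum_single {κ : Type u} [Fintype κ] [DecidableEq κ] {X : Type u}
    [AddCommGroup X] [Module R X] (z : (κ → R) ⊗[R] X) :
    ∑ k, (Pi.single k (1 : R)) ⊗ₜ[R] (chaseEqv κ X z k) = z := by
  induction z using TensorProduct.induction_on with
  | zero => simp
  | tmul f x =>
    simp only [chaseEqv_tmul]
    have hsw : ∀ k : κ, (Pi.single k (1 : R) : κ → R) ⊗ₜ[R] (f k • x)
        = (f k • (Pi.single k (1 : R) : κ → R)) ⊗ₜ[R] x := fun k => by
      rw [tmul_smul, smul_tmul']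
    rw [Finset.sum_congr rfl fun k _ => hsw k, ← sum_tmul]
    congr 1
    ext j
    simp [Pi.single_apply]
  | add a b ha hb =>
    simp only [map_add, Pi.add_apply, tmul_add, Finset.sum_add_distrib, ha, hb]

/-- `piRightHom` is bijective for finite free modules `κ → R`. -/
lemma chase_bij_free (κ : Type u) [Fintype κ] :
    Function.Bijective (TensorProduct.piRightHom R R (κ → R) M) := by
  classical
  constructor
  · intro x y h
    rw [← chase_sum_single x, ← chase_sum_single y]
    refine Finset.sum_congr rfl fun k _ => ?_
    congr 1
    ext i
    rw [← chaseEqv_component, ← chaseEqv_component, h]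
  · intro y
    refine ⟨∑ k, (Pi.single k (1 : R)) ⊗ₜ[R] (fun i => chaseEqv κ (M i) (y i) k), ?_⟩
    ext i
    simp only [map_sum, TensorProduct.piRightHom_tmul, Finset.sum_apply]
    exact chase_sum_single (y i)

/-- `piRightHom` bijectivity transfers along linear equivalences. -/
lemma chase_bij_equiv {N N' : Type u} [AddCommGroup N] [Module R N]
    [AddCommGroup N'] [Module R N'] (e : N ≃ₗ[R] N')
    (h : Function.Bijective (TensorProduct.piRightHom R R N M)) :
    Function.Bijective (TensorProduct.piRightHom R R N' M) := by
  have hre : Function.Bijective (e.toLinearMap.rTensor (∀ i, M i)) :=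
    (TensorProduct.congr e (LinearEquiv.refl R (∀ i, M i))).bijective
  have hrei : ∀ i, Function.Bijective (e.toLinearMap.rTensor (M i)) := fun i =>
    (TensorProduct.congr e (LinearEquiv.refl R (M i))).bijective
  constructor
  · intro x y hxy
    obtain ⟨x', rfl⟩ := hre.2 x
    obtain ⟨y', rfl⟩ := hre.2 y
    congr 1
    apply h.1
    ext i
    apply (hrei i).1
    rw [← chase_nat, ← chase_nat, hxy]
  · intro y
    obtain ⟨x, hx⟩ := h.2 (fun i => Function.surjInv (hrei i).2 (y i))
    refine ⟨e.toLinearMap.rTensor _ x, ?_⟩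
    ext i
    rw [chase_nat, hx]
    exact Function.surjInv_eq (hrei i).2 (y i)

/-- `piRightHom` is bijective for finitely presented modules. -/
lemma chase_bij_fp (N : Type u) [AddCommGroup N] [Module R N]
    [hfp : Module.FinitePresentation R N] :
    Function.Bijective (TensorProduct.piRightHom R R N M) := by
  classical
  obtain ⟨s, hs, hker⟩ := hfp
  set p : ((s : Type u) →₀ R) →ₗ[R] N := Finsupp.linearCombination R ((↑) : s → N) with hp
  have hpsurj : Function.Surjective p := by
    rw [← LinearMap.range_eq_top, Finsupp.range_linearCombination, Subtype.range_coe_subtype]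
    simpa using hs
  obtain ⟨t, ht⟩ := hker
  set q : ((t : Type u) →₀ R) →ₗ[R] ((s : Type u) →₀ R) :=
    Finsupp.linearCombination R ((↑) : t → ((s : Type u) →₀ R)) with hq
  have hrange : LinearMap.range q = LinearMap.ker p := by
    rw [hq, Finsupp.range_linearCombination, Subtype.range_coe_subtype, Finset.setOf_mem, ht]
  have hexact : Function.Exact q p := LinearMap.exact_iff.mpr hrange.symm
  have hpq : p ∘ₗ q = 0 := by
    apply LinearMap.ext
    intro x
    simp only [LinearMap.comp_apply, LinearMap.zero_apply]
    have : q x ∈ LinearMap.ker p := hrange ▸ LinearMap.mem_range_self q x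
    exact this
  -- bijectivity of piRightHom for the free modules
  have hbij0 : Function.Bijective (TensorProduct.piRightHom R R ((s : Type u) →₀ R) M) :=
    chase_bij_equiv (M := M) (Finsupp.linearEquivFunOnFinite R R s).symm
      (chase_bij_free (M := M) ↥s)
  have hbij1 : Function.Bijective (TensorProduct.piRightHom R R ((t : Type u) →₀ R) M) :=
    chase_bij_equiv (M := M) (Finsupp.linearEquivFunOnFinite R R t).symm
      (chase_bij_free (M := M) ↥t)
  constructor
  · -- injectivity
    have hz : ∀ x : N ⊗[R] (∀ i, M i),
        TensorProduct.piRightHom R R N M x = 0 → x = 0 := by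
      intro x hx
      obtain ⟨y, rfl⟩ := LinearMap.rTensor_surjective (∀ i, M i) hpsurj x
      have hw : ∀ i, p.rTensor (M i)
          (TensorProduct.piRightHom R R ((s : Type u) →₀ R) M y i) = 0 := by
        intro i
        rw [← chase_nat]
        exact congrFun hx i
      have hmem : ∀ i, TensorProduct.piRightHom R R ((s : Type u) →₀ R) M y i ∈
          Set.range (q.rTensor (M i)) := by
        intro i
        exact ((rTensor_exact (M i) hexact hpsurj) _).mp (hw i)
      choose u hu using hmem
      obtain ⟨v, hv⟩ := hbij1.2 u
      have : q.rTensor (∀ i, M i) v = y := by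
        apply hbij0.1
        ext i
        rw [chase_nat, hv]
        exact hu i
      rw [← this, ← LinearMap.comp_apply, ← LinearMap.rTensor_comp, hpq]
      simp
    intro x y hxy
    have := hz (x - y) (by rw [map_sub, hxy, sub_self])
    exact sub_eq_zero.mp this
  · -- surjectivity
    intro y
    have hsurji : ∀ i, Function.Surjective (p.rTensor (M i)) := fun i =>
      LinearMap.rTensor_surjective (M i) hpsurj
    obtain ⟨x, hx⟩ := hbij0.2 (fun i => Function.surjInv (hsurji i) (y i))
    refine ⟨p.rTensor _ x, ?_⟩
    ext i
    rw [chase_nat, hx]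
    exact Function.surjInv_eq (hsurji i) (y i)

/-- Chase: over a coherent ring, products of flat modules are flat. -/
lemma chase_flat_pi (hcoh : ∀ I : Ideal R, I.FG → Module.FinitePresentation R I)
    (hflat : ∀ i, Module.Flat R (M i)) : Module.Flat R (∀ i, M i) := by
  rw [Module.Flat.iff_rTensor_injective]
  intro I hI
  have : Module.FinitePresentation R I := hcoh I hI
  have hbijI : Function.Bijective (TensorProduct.piRightHom R R I M) := chase_bij_fp I
  have hinji : ∀ i, Function.Injective (I.subtype.rTensor (M i)) := fun i =>
    Module.Flat.iff_rTensor_injective'.mp (hflat i) I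
  intro x y hxy
  apply hbijI.1
  ext i
  apply hinji i
  rw [← chase_nat, ← chase_nat, hxy]

end aux

/-- Over a coherent commutative ring `R` (every finitely generated ideal is finitely
presented): (1) for `Q` a finitely generated projective `R`-module and `P` a flat
`R`-module, `Hom_R(Q, P)` is flat; (2) any product of flat `R`-modules is flat;
(3) hence `Hom_R(Q, P)` is flat for every projective `R`-module `Q` and flat `R`-module
`P`. -/
theorem coherent_hom_flat (R : Type u) [CommRing R]
    (hcoh : ∀ I : Ideal R, I.FG → Module.FinitePresentation R I) :
    (∀ (Q P : Type u) (_ : AddCommGroup Q) (_ : Module R Q) (_ : AddCommGroup P)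
        (_ : Module R P), Module.Finite R Q → Module.Projective R Q → Module.Flat R P →
        Module.Flat R (Q →ₗ[R] P)) ∧
    (∀ (ι : Type u) (M : ι → Type u) (_ : ∀ i, AddCommGroup (M i))
        (_ : ∀ i, Module R (M i)), (∀ i, Module.Flat R (M i)) →
        Module.Flat R (∀ i, M i)) ∧
    (∀ (Q P : Type u) (_ : AddCommGroup Q) (_ : Module R Q) (_ : AddCommGroup P)
        (_ : Module R P), Module.Projective R Q → Module.Flat R P →
        Module.Flat R (Q →ₗ[R] P)) := by
  have part2 : ∀ (ι : Type u) (M : ι → Type u) (_ : ∀ i, AddCommGroup (M i))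
      (_ : ∀ i, Module R (M i)), (∀ i, Module.Flat R (M i)) →
      Module.Flat R (∀ i, M i) := by
    intro ι M _ _ hflat
    exact chase_flat_pi hcoh hflat
  have part3 : ∀ (Q P : Type u) (_ : AddCommGroup Q) (_ : Module R Q) (_ : AddCommGroup P)
      (_ : Module R P), Module.Projective R Q → Module.Flat R P →
      Module.Flat R (Q →ₗ[R] P) := by
    intro Q P _ _ _ _ hproj hP
    obtain ⟨s, hs⟩ := (Module.projective_def.mp hproj)
    -- (Q →₀ R) →ₗ P is flat: it is equivalent to Q → P, a product of flats
    have hpiflat : Module.Flat R (Q → P) := part2 Q (fun _ => P) _ _ (fun _ => hP)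
    have hflatF : Module.Flat R ((Q →₀ R) →ₗ[R] P) :=
      Module.Flat.of_linearEquiv (Finsupp.llift P R R Q).symm
    -- Hom(Q, P) is a retract of Hom(Q →₀ R, P)
    exact Module.Flat.of_retract
      (LinearMap.lcomp R P (Finsupp.linearCombination R (id : Q → Q)))
      (LinearMap.lcomp R P s)
      (by
        ext g x
        simp [LinearMap.lcomp_apply, hs x])
  exact ⟨fun Q P _ _ _ _ _ hproj hP => part3 Q P _ _ _ _ hproj hP, part2, part3⟩
end
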